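/- arXiv:2508.11306 — 8 statements merged into one kernel-verified Lean document; each statement's English description precedes it below -/
import Mathlib

section
/- Let R be a commutative ring and P an ideal of R. Let m₀, m₁, m₂, m₃ be finite index types with order functions a⁰ : m₀ → ℤ, a¹ : m₁ → ℤ, a² : m₂ → ℤ, a³ : m₃ → ℤ, and let F₁ : R^{m₁} → R^{m₀}, F₂ : R^{m₂} → R^{m₁}, F₃ : R^{m₃} → R^{m₂} be R-linear maps given by matrices whose entries satisfy (F₂)_{p,q} ∈ P^⟨a²_q − a¹_p⟩ for all p ∈ m₁, q ∈ m₂, and (F₃)_{q,l} ∈ P^⟨a³_l − a²_q⟩ for all q ∈ m₂, l ∈ m₃. Assume (i) F₂ ∘ F₃ = 0 and ker F₁ = range F₂, and (ii) (graded lifting property) for every r ∈ ℤ and every t : m₂ → R such that t_q ∈ P^⟨r − a²_q⟩ for all q and (F₂ t)_p ∈ P^⟨r − a¹_p + 1⟩ for all p, there exists s : m₃ → R with s_l ∈ P^⟨r − a³_l⟩ for all l and (t − F₃ s)_q ∈ P^⟨r − a²_q + 1⟩ for all q. Then for every r ∈ ℤ the restriction of the complex to the level-r submodules remains exact in the middle: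 every v : m₁ → R with F₁ v = 0 and v_p ∈ P^⟨r − a¹_p⟩ for all p equals F₂ t for some t : m₂ → R with t_q ∈ P^⟨r − a²_q⟩ for all q; conversely F₂ maps the level-r submodule of R^{m₂} into the level-r submodule of R^{m₁} intersected with ker F₁. -/
/-- `P^⟨n⟩ = P^{max(n,0)}` for an integer `n` (so `P^⟨n⟩ = R` when `n ≤ 0`). -/
def Ideal.zpowNat {R : Type*} [CommRing R] (P : Ideal R) (n : ℤ) : Ideal R :=
  P ^ n.toNat

lemma zpowNat_mono {R : Type*} [CommRing R] (P : Ideal R) {a b : ℤ} (h : a ≤ b) :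
    P.zpowNat b ≤ P.zpowNat a :=
  Ideal.pow_le_pow_right (Int.toNat_le_toNat h)

lemma mem_zpowNat_mul {R : Type*} [CommRing R] (P : Ideal R) {a b : ℤ} {x y : R}
    (hx : x ∈ P.zpowNat a) (hy : y ∈ P.zpowNat b) : x * y ∈ P.zpowNat (a + b) := by
  have h : P ^ (a.toNat + b.toNat) ≤ P ^ (a + b).toNat :=
    Ideal.pow_le_pow_right (by omega)
  exact h (by rw [pow_add]; exact Ideal.mul_mem_mul hx hy)

/-- exactness of the level-`r` restriction of a standard resolution. -/
theorem statement0 {R : Type*} [CommRing R] (P : Ideal R)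
    {m₀ m₁ m₂ m₃ : Type*} [Fintype m₀] [Fintype m₁] [Fintype m₂] [Fintype m₃]
    (a₀ : m₀ → ℤ) (a₁ : m₁ → ℤ) (a₂ : m₂ → ℤ) (a₃ : m₃ → ℤ)
    (F₁ : Matrix m₀ m₁ R) (F₂ : Matrix m₁ m₂ R) (F₃ : Matrix m₂ m₃ R)
    (hF₂ : ∀ p q, F₂ p q ∈ P.zpowNat (a₂ q - a₁ p))
    (hF₃ : ∀ q l, F₃ q l ∈ P.zpowNat (a₃ l - a₂ q))
    (hcomp : F₂ * F₃ = 0)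
    (hexact : ∀ v : m₁ → R, F₁.mulVec v = 0 ↔ ∃ t : m₂ → R, v = F₂.mulVec t)
    (hlift : ∀ (r : ℤ) (t : m₂ → R),
      (∀ q, t q ∈ P.zpowNat (r - a₂ q)) →
      (∀ p, F₂.mulVec t p ∈ P.zpowNat (r - a₁ p + 1)) →
      ∃ s : m₃ → R, (∀ l, s l ∈ P.zpowNat (r - a₃ l)) ∧
        ∀ q, t q - F₃.mulVec s q ∈ P.zpowNat (r - a₂ q + 1)) :
    ∀ r : ℤ,
      (∀ v : m₁ → R, F₁.mulVec v = 0 → (∀ p, v p ∈ P.zpowNat (r - a₁ p)) →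
        ∃ t : m₂ → R, (∀ q, t q ∈ P.zpowNat (r - a₂ q)) ∧ v = F₂.mulVec t) ∧
      (∀ t : m₂ → R, (∀ q, t q ∈ P.zpowNat (r - a₂ q)) →
        F₁.mulVec (F₂.mulVec t) = 0 ∧ ∀ p, F₂.mulVec t p ∈ P.zpowNat (r - a₁ p)) := by
  -- grading of F₂.mulVec t
  have hgrade : ∀ (r : ℤ) (t : m₂ → R), (∀ q, t q ∈ P.zpowNat (r - a₂ q)) →
      ∀ p, F₂.mulVec t p ∈ P.zpowNat (r - a₁ p) := by
    intro r t ht p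
    unfold Matrix.mulVec dotProduct
    refine Ideal.sum_mem _ fun q _ => ?_
    have := mem_zpowNat_mul P (hF₂ p q) (ht q)
    have he : a₂ q - a₁ p + (r - a₂ q) = r - a₁ p := by ring
    rwa [he] at this
  -- main induction
  have main : ∀ (n : ℕ) (r : ℤ), (∀ q, r ≤ a₂ q + n) →
      ∀ v : m₁ → R, F₁.mulVec v = 0 → (∀ p, v p ∈ P.zpowNat (r - a₁ p)) →
        ∃ t : m₂ → R, (∀ q, t q ∈ P.zpowNat (r - a₂ q)) ∧ v = F₂.mulVec t := by
    intro n
    induction n with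
    | zero =>
      intro r hr v hv _
      obtain ⟨t, ht⟩ := (hexact v).mp hv
      refine ⟨t, fun q => ?_, ht⟩
      have : (r - a₂ q).toNat = 0 := Int.toNat_of_nonpos (by have := hr q; omega)
      simp [Ideal.zpowNat, this]
    | succ n ih =>
      intro r hr v hv hvmem
      have hvmem' : ∀ p, v p ∈ P.zpowNat (r - 1 - a₁ p) := fun p =>
        zpowNat_mono P (by omega) (hvmem p)
      obtain ⟨t, htmem, htv⟩ := ih (r - 1) (fun q => by have := hr q; push_cast; omega) v hv hvmem'
      obtain ⟨s, hsmem, hts⟩ := hlift (r - 1) t htmem (fun p => by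
        rw [← htv]
        have := hvmem p
        have he : r - 1 - a₁ p + 1 = r - a₁ p := by ring
        rwa [he])
      refine ⟨fun q => t q - F₃.mulVec s q, fun q => ?_, ?_⟩
      · have := hts q
        have he : r - 1 - a₂ q + 1 = r - a₂ q := by ring
        rwa [he] at this
      · have : F₂.mulVec (fun q => t q - F₃.mulVec s q) =
            F₂.mulVec t - F₂.mulVec (F₃.mulVec s) := by
          rw [← Matrix.mulVec_sub]; rfl
        rw [this, Matrix.mulVec_mulVec, hcomp]
        simp [htv]
  intro r
  constructor
  · intro v hv hvmem
    refine main (Finset.univ.sup fun q => (r - a₂ q).toNat) r (fun q => ?_) v hv hvmem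
    have h1 : (r - a₂ q).toNat ≤ Finset.univ.sup fun q => (r - a₂ q).toNat :=
      Finset.le_sup (f := fun q => (r - a₂ q).toNat) (Finset.mem_univ q)
    have h2 : r - a₂ q ≤ (r - a₂ q).toNat := Int.self_le_toNat _
    omega
  · intro t htmem
    refine ⟨(hexact _).mpr ⟨t, rfl⟩, hgrade r t htmem⟩
end

section
/- Fix integers a ≥ 1 and i ∈ ℤ. Suppose the complex relations F_{j−1} ∘ F_j = 0 and the null-homotopy relations K_j ∘ F_j + F_{j+1} ∘ K_{j+1} = w·id_{M_j} hold for all j ∈ ℤ, that the higher-homotopy recursion Rec(a′, i′) holds for all 1 ≤ a′ ≤ a−1 and all i′ ∈ ℤ, and that Rec(a, i−1) holds. Then F_{i+2a−1} ∘ ( Σ_{a₁+a₂=a−1, a₁,a₂ ≥ 0} K^{(a₁)}_{i+2a₂+1} ∘ K^{(a₂)}_i + K^{(a)}_{i−1} ∘ F_{i−1} ) = 0 as a map M_{i−1} → M_{i+2a−2}. -/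
/-- Transport of a linear map along equalities of the indices of a `ℤ`-indexed
family of modules. -/
def lcast {R : Type*} [CommRing R] {M : ℤ → Type*}
    [∀ i, AddCommGroup (M i)] [∀ i, Module R (M i)]
    {i i' j j' : ℤ} (hi : i = i') (hj : j = j')
    (f : M i →ₗ[R] M j) : M i' →ₗ[R] M j' := by
  subst hi; subst hj; exact f

/-- The higher-homotopy recursion `Rec(a, i)` (for `a ≥ 1`):
`Σ_{a₁+a₂=a−1} K^{(a₁)}_{i+2a₂+1} ∘ K^{(a₂)}_i + F_{i+2a} ∘ K^{(a)}_i
  + K^{(a)}_{i−1} ∘ F_{i−1} = 0` as maps `M_{i−1} → M_{i+2a−1}`. -/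
def Rec {R : Type*} [CommRing R] {M : ℤ → Type*}
    [∀ i, AddCommGroup (M i)] [∀ i, Module R (M i)]
    (F : ∀ i : ℤ, M i →ₗ[R] M (i - 1))
    (Ka : ∀ (a : ℕ) (i : ℤ), M (i - 1) →ₗ[R] M (i + 2 * a))
    (a : ℕ) (ha : 1 ≤ a) (i : ℤ) : Prop :=
  (∑ p ∈ (Finset.HasAntidiagonal.antidiagonal (a - 1)).attach,
      lcast rfl
        (show i + 2 * (p.1.2 : ℤ) + 1 + 2 * (p.1.1 : ℤ) = i + 2 * (a : ℤ) - 1 by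
          have hp := Finset.HasAntidiagonal.mem_antidiagonal.mp p.2
          omega)
        ((Ka p.1.1 (i + 2 * (p.1.2 : ℤ) + 1)).comp
          (lcast rfl (show i + 2 * (p.1.2 : ℤ) = i + 2 * (p.1.2 : ℤ) + 1 - 1 by ring)
            (Ka p.1.2 i))))
    + (F (i + 2 * a)).comp (Ka a i)
    + lcast rfl (show i - 1 + 2 * (a : ℤ) = i + 2 * (a : ℤ) - 1 by ring)
        ((Ka a (i - 1)).comp (F (i - 1)))
  = 0

namespace S1

open Finset

variable {R : Type*} [CommRing R] {M : ℤ → Type*}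
  [∀ i, AddCommGroup (M i)] [∀ i, Module R (M i)]

theorem lcast_self {i j : ℤ} (hi : i = i) (hj : j = j) (g : M i →ₗ[R] M j) :
    lcast hi hj g = g := rfl

def cst {p q : ℤ} (h : p = q) : M p →ₗ[R] M q := lcast rfl h LinearMap.id

theorem cst_self {p : ℤ} (h : p = p) : cst (R := R) (M := M) h = LinearMap.id := rfl

def ι (j : ℤ) : M j →ₗ[R] (Π₀ j : ℤ, M j) := DFinsupp.lsingle j

theorem ι_cst {p q : ℤ} (h : p = q) : (ι (R := R) (M := M) q).comp (cst h) = ι p := by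
  subst h; rfl

theorem ι_lcast {i i' j j' : ℤ} (hi : i = i') (hj : j = j') (g : M i →ₗ[R] M j) :
    (ι j').comp (lcast hi hj g) = ((ι j).comp g).comp (cst hi.symm) := by
  subst hi; subst hj; rfl

def Rep (x : Module.End R (Π₀ j : ℤ, M j)) {j k : ℤ} (g : M j →ₗ[R] M k) : Prop :=
  x.comp (ι j) = (ι k).comp g

theorem Rep.out {x : Module.End R (Π₀ j : ℤ, M j)} {j k : ℤ} {g : M j →ₗ[R] M k}
    (h : Rep x g) : x.comp (ι j) = (ι k).comp g := h

theorem Rep.mul {x y : Module.End R (Π₀ j : ℤ, M j)} {j k l : ℤ}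
    {g : M j →ₗ[R] M k} {h : M k →ₗ[R] M l}
    (hx : Rep x g) (hy : Rep y h) : Rep (y * x) (h.comp g) := by
  unfold Rep at *
  rw [Module.End.mul_eq_comp, LinearMap.comp_assoc, hx, ← LinearMap.comp_assoc, hy,
    LinearMap.comp_assoc]

theorem Rep.add {x y : Module.End R (Π₀ j : ℤ, M j)} {j k : ℤ}
    {g h : M j →ₗ[R] M k} (hx : Rep x g) (hy : Rep y h) : Rep (x + y) (g + h) := by
  unfold Rep at *
  rw [LinearMap.add_comp, hx, hy, LinearMap.comp_add]

theorem Rep.sum {σ : Type*} {s : Finset σ} {x : σ → Module.End R (Π₀ j : ℤ, M j)} {j k : ℤ}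
    {g : σ → (M j →ₗ[R] M k)} (h : ∀ p ∈ s, Rep (x p) (g p)) :
    Rep (∑ p ∈ s, x p) (∑ p ∈ s, g p) := by
  unfold Rep at *
  refine LinearMap.ext fun v => ?_
  simp only [LinearMap.comp_apply, LinearMap.sum_apply, map_sum]
  exact Finset.sum_congr rfl fun p hp => by simpa using LinearMap.congr_fun (h p hp) v

theorem Rep.cast {x : Module.End R (Π₀ j : ℤ, M j)} {j j' k k' : ℤ}
    {g : M j →ₗ[R] M k} (hj : j = j') (hk : k = k') (h : Rep x g) :
    Rep x (lcast hj hk g) := by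
  subst hj; subst hk; exact h

theorem rep_w_one (w : R) (j : ℤ) :
    Rep (w • (1 : Module.End R (Π₀ j : ℤ, M j))) (w • (LinearMap.id : M j →ₗ[R] M j)) := by
  unfold Rep; ext v; simp [ι]

theorem Rep.zero {x : Module.End R (Π₀ j : ℤ, M j)} {j k : ℤ} {g : M j →ₗ[R] M k}
    (rep : Rep x g) (hg : g = 0) : x.comp (ι j) = 0 := by
  rw [rep.out, hg, LinearMap.comp_zero]

theorem Rep.eq_zero {x : Module.End R (Π₀ j : ℤ, M j)} {j k : ℤ} {g : M j →ₗ[R] M k}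
    (rep : Rep x g) (hx : x.comp (ι j) = 0) : g = 0 := by
  have h : (ι (R := R) (M := M) k).comp g = 0 := by rw [← rep.out, hx]
  ext v
  have h2 : ι (R := R) (M := M) k (g v) = 0 := by
    have := LinearMap.congr_fun h v; simpa using this
  simpa [ι, DFinsupp.single_eq_zero] using h2

theorem end_ext {x y : Module.End R (Π₀ j : ℤ, M j)}
    (h : ∀ m : ℤ, x.comp (ι (m - 1)) = y.comp (ι (m - 1))) : x = y := by
  apply DFinsupp.lhom_ext'
  intro j
  have h2 := h (j + 1)
  rw [show (j : ℤ) + 1 - 1 = j by ring] at h2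
  exact h2

def tot (d : ℤ) (G : ∀ j : ℤ, M j →ₗ[R] M (j + d)) : Module.End R (Π₀ j : ℤ, M j) :=
  DFinsupp.lsum ℕ fun j => (ι (j + d)).comp (G j)

theorem tot_ι (d : ℤ) (G : ∀ j : ℤ, M j →ₗ[R] M (j + d)) (j : ℤ) :
    (tot d G).comp (ι j) = (ι (j + d)).comp (G j) := by
  ext x; simp [tot, ι]

section fam

variable (F : ∀ i : ℤ, M i →ₗ[R] M (i - 1)) (K : ∀ i : ℤ, M (i - 1) →ₗ[R] M i)
  (Ka : ∀ (a : ℕ) (i : ℤ), M (i - 1) →ₗ[R] M (i + 2 * a))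

def ftot : Module.End R (Π₀ j : ℤ, M j) :=
  tot (-1) fun j => lcast rfl (show j - 1 = j + (-1) by ring) (F j)

def utot (b : ℕ) : Module.End R (Π₀ j : ℤ, M j) :=
  tot (2 * (b : ℤ) + 1) fun j =>
    lcast (show j + 1 - 1 = j by ring)
      (show j + 1 + 2 * (b : ℤ) = j + (2 * (b : ℤ) + 1) by ring)
      (Ka b (j + 1))

theorem rep_f (j : ℤ) : Rep (ftot F) (F j) := by
  unfold Rep ftot
  rw [tot_ι, ι_lcast, cst_self, LinearMap.comp_id]

theorem Ka_cst {m m' : ℤ} (e : m' = m) (h : m - 1 = m' - 1) (b : ℕ)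
    (h2 : m + 2 * (b : ℤ) = m' + 2 * (b : ℤ)) :
    (Ka b m').comp (cst h) = lcast rfl h2 (Ka b m) := by
  subst e; rfl

theorem rep_u (b : ℕ) (m : ℤ) : Rep (utot Ka b) (Ka b m) := by
  unfold Rep utot
  rw [tot_ι, ι_lcast, LinearMap.comp_assoc,
    Ka_cst Ka (show m - 1 + 1 = m by ring) _ b (show m + 2 * (b : ℤ) = m - 1 + 1 + 2 * (b : ℤ) by ring),
    ι_lcast, cst_self, LinearMap.comp_id]

theorem rep_u0 (hK0 : ∀ i : ℤ, Ka 0 i = lcast rfl (show i = i + 2 * ((0 : ℕ) : ℤ) by simp) (K i))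
    (m : ℤ) : Rep (utot Ka 0) (K m) := by
  have h := rep_u Ka 0 m
  rw [hK0 m] at h
  unfold Rep at h ⊢
  rw [h, ι_lcast, cst_self, LinearMap.comp_id]

theorem lcast_FK {m m' : ℤ} (e : m' = m) (h1 h2 : m' - 1 = m - 1) :
    lcast h1 h2 ((F m').comp (K m')) = (F m).comp (K m) := by
  subst e; rfl

theorem hom' (w : R)
    (hhomotopy : ∀ j : ℤ,
      (K j).comp (F j)
        + lcast (show j + 1 - 1 = j by ring) (show j + 1 - 1 = j by ring)
            ((F (j + 1)).comp (K (j + 1)))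
      = w • (LinearMap.id : M j →ₗ[R] M j))
    (m : ℤ) :
    (F m).comp (K m) + (K (m - 1)).comp (F (m - 1))
      = w • (LinearMap.id : M (m - 1) →ₗ[R] M (m - 1)) := by
  have h := hhomotopy (m - 1)
  rw [lcast_FK F K (show m - 1 + 1 = m by ring)] at h
  rw [add_comm] at h
  exact h

end fam

section ring

variable {A : Type*} [Ring A]

theorem key_core (u : ℕ → A) (n : ℕ) :
    ∑ k ∈ Finset.range n, (∑ q ∈ Finset.HasAntidiagonal.antidiagonal k, u q.1 * u q.2) * u (n - (k + 1))
      = ∑ k ∈ Finset.range n, u k * ∑ q ∈ Finset.HasAntidiagonal.antidiagonal (n - k - 1), u q.1 * u q.2 := by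
  simp only [Finset.sum_mul, Finset.mul_sum]
  rw [Finset.sum_sigma', Finset.sum_sigma']
  refine Finset.sum_bij' (fun x _ => ⟨x.2.1, (x.2.2, n - (x.1 + 1))⟩)
    (fun x _ => ⟨x.1 + x.2.1, (x.1, x.2.1)⟩) ?_ ?_ ?_ ?_ ?_ <;>
    rintro ⟨k, q1, q2⟩ hx <;>
    simp only [Finset.mem_sigma, Finset.mem_range, Finset.HasAntidiagonal.mem_antidiagonal] at hx ⊢
  · exact ⟨by omega, by omega⟩
  · exact ⟨by omega, trivial⟩
  · obtain ⟨h1, h2⟩ := hx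
    subst h2
    rfl
  · obtain ⟨h1, h2⟩ := hx
    have h3 : n - (k + q1 + 1) = q2 := by omega
    subst h3
    rfl
  · exact mul_assoc _ _ _

theorem key_comm' (c : A) (hc : ∀ x : A, c * x = x * c) (f : A) (u : ℕ → A) (n : ℕ)
    (h0 : f * u 0 + u 0 * f = c)
    (hb : ∀ b, 1 ≤ b → b ≤ n →
      (∑ p ∈ Finset.HasAntidiagonal.antidiagonal (b - 1), u p.1 * u p.2) + f * u b + u b * f = 0) :
    f * (∑ p ∈ Finset.HasAntidiagonal.antidiagonal n, u p.1 * u p.2)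
      = (∑ p ∈ Finset.HasAntidiagonal.antidiagonal n, u p.1 * u p.2) * f := by
  have hd : ∀ b, 1 ≤ b → b ≤ n →
      f * u b + u b * f = -(∑ p ∈ Finset.HasAntidiagonal.antidiagonal (b - 1), u p.1 * u p.2) := by
    intro b h1 h2
    have h3 := hb b h1 h2
    have h4 : (∑ p ∈ Finset.HasAntidiagonal.antidiagonal (b - 1), u p.1 * u p.2) + (f * u b + u b * f) = 0 := by
      rw [← add_assoc]; exact h3
    rw [add_comm] at h4
    exact eq_neg_of_add_eq_zero_left h4
  set D : ℕ → A := fun b =>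
    if b = 0 then c else -(∑ p ∈ Finset.HasAntidiagonal.antidiagonal (b - 1), u p.1 * u p.2) with hD
  have hdD : ∀ b, b ≤ n → f * u b + u b * f = D b := by
    intro b hbn
    by_cases h : b = 0
    · subst h
      simp only [hD, if_pos rfl]
      exact h0
    · rw [hD]
      simp only [if_neg h]
      exact hd b (Nat.one_le_iff_ne_zero.mpr h) hbn
  have expand : ∀ p ∈ Finset.HasAntidiagonal.antidiagonal n, f * (u p.1 * u p.2)
      = D p.1 * u p.2 - u p.1 * D p.2 + (u p.1 * u p.2) * f := by
    intro p hp
    have h1 := Finset.HasAntidiagonal.mem_antidiagonal.mp hp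
    rw [← hdD p.1 (by omega), ← hdD p.2 (by omega)]
    noncomm_ring
  have hEq : (∑ p ∈ Finset.HasAntidiagonal.antidiagonal n, D p.1 * u p.2)
      = ∑ p ∈ Finset.HasAntidiagonal.antidiagonal n, u p.1 * D p.2 := by
    rw [Finset.Nat.sum_antidiagonal_eq_sum_range_succ_mk,
      Finset.Nat.sum_antidiagonal_eq_sum_range_succ_mk,
      Finset.sum_range_succ', Finset.sum_range_succ]
    have e0 : D 0 = c := by simp [hD]
    have eS : ∀ k ∈ Finset.range n, D (k + 1) * u (n - (k + 1))
        = -((∑ q ∈ Finset.HasAntidiagonal.antidiagonal k, u q.1 * u q.2) * u (n - (k + 1))) := by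
      intro k hk
      rw [hD]
      simp only [Nat.add_sub_cancel, if_neg (Nat.succ_ne_zero k)]
      rw [neg_mul]
    have eS2 : ∀ k ∈ Finset.range n, u k * D (n - k)
        = -(u k * ∑ q ∈ Finset.HasAntidiagonal.antidiagonal (n - k - 1), u q.1 * u q.2) := by
      intro k hk
      have hk' := Finset.mem_range.mp hk
      rw [hD]
      simp only [if_neg (by omega : ¬ n - k = 0)]
      rw [mul_neg]
    rw [Finset.sum_congr rfl eS, Finset.sum_congr rfl eS2, Nat.sub_self, Nat.sub_zero, e0,
      Finset.sum_neg_distrib, Finset.sum_neg_distrib, key_core u n, hc (u n)]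
  calc f * (∑ p ∈ Finset.HasAntidiagonal.antidiagonal n, u p.1 * u p.2)
      = ∑ p ∈ Finset.HasAntidiagonal.antidiagonal n, f * (u p.1 * u p.2) := Finset.mul_sum _ _ _
    _ = ∑ p ∈ Finset.HasAntidiagonal.antidiagonal n,
        (D p.1 * u p.2 - u p.1 * D p.2 + (u p.1 * u p.2) * f) := Finset.sum_congr rfl expand
    _ = ((∑ p ∈ Finset.HasAntidiagonal.antidiagonal n, D p.1 * u p.2)
          - ∑ p ∈ Finset.HasAntidiagonal.antidiagonal n, u p.1 * D p.2)
        + (∑ p ∈ Finset.HasAntidiagonal.antidiagonal n, u p.1 * u p.2) * f := by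
        rw [Finset.sum_add_distrib, Finset.sum_sub_distrib, Finset.sum_mul]
    _ = (∑ p ∈ Finset.HasAntidiagonal.antidiagonal n, u p.1 * u p.2) * f := by
        rw [hEq, sub_self, zero_add]

end ring

section assemble

variable (F : ∀ i : ℤ, M i →ₗ[R] M (i - 1)) (K : ∀ i : ℤ, M (i - 1) →ₗ[R] M i)
  (Ka : ∀ (a : ℕ) (i : ℤ), M (i - 1) →ₗ[R] M (i + 2 * a))

def SB (b : ℕ) : Module.End R (Π₀ j : ℤ, M j) :=
  ∑ p ∈ (Finset.HasAntidiagonal.antidiagonal (b - 1)).attach, utot Ka p.1.1 * utot Ka p.1.2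

theorem rep_SB (b : ℕ) (hb : 1 ≤ b) (m : ℤ) :
    Rep (SB Ka b)
      (∑ p ∈ (Finset.HasAntidiagonal.antidiagonal (b - 1)).attach,
        lcast rfl
          (show m + 2 * (p.1.2 : ℤ) + 1 + 2 * (p.1.1 : ℤ) = m + 2 * (b : ℤ) - 1 by
            have hp := Finset.HasAntidiagonal.mem_antidiagonal.mp p.2
            omega)
          ((Ka p.1.1 (m + 2 * (p.1.2 : ℤ) + 1)).comp
            (lcast rfl (show m + 2 * (p.1.2 : ℤ) = m + 2 * (p.1.2 : ℤ) + 1 - 1 by ring)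
              (Ka p.1.2 m)))) := by
  unfold SB
  refine Rep.sum fun p hp => ?_
  exact Rep.cast rfl _
    (Rep.mul (Rep.cast rfl _ (rep_u Ka p.1.2 m)) (rep_u Ka p.1.1 (m + 2 * (p.1.2 : ℤ) + 1)))

theorem rep_recLHS (b : ℕ) (hb : 1 ≤ b) (m : ℤ) :
    Rep (SB Ka b + ftot F * utot Ka b + utot Ka b * ftot F)
      ((∑ p ∈ (Finset.HasAntidiagonal.antidiagonal (b - 1)).attach,
        lcast rfl
          (show m + 2 * (p.1.2 : ℤ) + 1 + 2 * (p.1.1 : ℤ) = m + 2 * (b : ℤ) - 1 by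
            have hp := Finset.HasAntidiagonal.mem_antidiagonal.mp p.2
            omega)
          ((Ka p.1.1 (m + 2 * (p.1.2 : ℤ) + 1)).comp
            (lcast rfl (show m + 2 * (p.1.2 : ℤ) = m + 2 * (p.1.2 : ℤ) + 1 - 1 by ring)
              (Ka p.1.2 m))))
        + (F (m + 2 * b)).comp (Ka b m)
        + lcast rfl (show m - 1 + 2 * (b : ℤ) = m + 2 * (b : ℤ) - 1 by ring)
            ((Ka b (m - 1)).comp (F (m - 1)))) := by
  refine Rep.add (Rep.add (rep_SB Ka b hb m) ?_) ?_
  · exact Rep.mul (rep_u Ka b m) (rep_f F (m + 2 * (b : ℤ)))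
  · exact Rep.cast rfl _ (Rep.mul (rep_f F (m - 1)) (rep_u Ka b (m - 1)))

theorem SB_rel (b : ℕ) (hb : 1 ≤ b) (hrecb : ∀ m : ℤ, Rec F Ka b hb m) :
    SB Ka b + ftot F * utot Ka b + utot Ka b * ftot F = 0 := by
  apply end_ext
  intro m
  rw [LinearMap.zero_comp]
  exact Rep.zero (rep_recLHS F Ka b hb m) (hrecb m)

end assemble

end S1

theorem statement1 {R : Type*} [CommRing R] (w : R) {M : ℤ → Type*}
    [∀ i, AddCommGroup (M i)] [∀ i, Module R (M i)]
    (F : ∀ i : ℤ, M i →ₗ[R] M (i - 1))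
    (K : ∀ i : ℤ, M (i - 1) →ₗ[R] M i)
    (Ka : ∀ (a : ℕ) (i : ℤ), M (i - 1) →ₗ[R] M (i + 2 * a))
    (hK0 : ∀ i : ℤ, Ka 0 i = lcast rfl (show i = i + 2 * ((0 : ℕ) : ℤ) by simp) (K i))
    (a : ℕ) (ha : 1 ≤ a) (i : ℤ)
    (hcomplex : ∀ j : ℤ, (F (j - 1)).comp (F j) = 0)
    (hhomotopy : ∀ j : ℤ,
      (K j).comp (F j)
        + lcast (show j + 1 - 1 = j by ring) (show j + 1 - 1 = j by ring)
            ((F (j + 1)).comp (K (j + 1)))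
      = w • (LinearMap.id : M j →ₗ[R] M j))
    (hrec : ∀ (a' : ℕ) (ha' : 1 ≤ a'), a' ≤ a - 1 → ∀ i' : ℤ, Rec F Ka a' ha' i')
    (hrecprev : Rec F Ka a ha (i - 1)) :
    (F (i + 2 * a - 1)).comp
      ((∑ p ∈ (Finset.HasAntidiagonal.antidiagonal (a - 1)).attach,
          lcast rfl
            (show i + 2 * (p.1.2 : ℤ) + 1 + 2 * (p.1.1 : ℤ) = i + 2 * (a : ℤ) - 1 by
              have hp := Finset.HasAntidiagonal.mem_antidiagonal.mp p.2
              omega)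
            ((Ka p.1.1 (i + 2 * (p.1.2 : ℤ) + 1)).comp
              (lcast rfl (show i + 2 * (p.1.2 : ℤ) = i + 2 * (p.1.2 : ℤ) + 1 - 1 by ring)
                (Ka p.1.2 i))))
        + lcast rfl (show i - 1 + 2 * (a : ℤ) = i + 2 * (a : ℤ) - 1 by ring)
            ((Ka a (i - 1)).comp (F (i - 1)))) = 0 := by
  classical
  set f := S1.ftot F with hf
  set u := S1.utot Ka with hu
  -- complex relation at the level of endomorphisms
  have hf2 : f * f = 0 := by
    apply S1.end_ext
    intro m
    rw [LinearMap.zero_comp]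
    exact S1.Rep.zero (S1.Rep.mul (S1.rep_f F (m - 1)) (S1.rep_f F (m - 1 - 1))) (hcomplex (m - 1))
  -- homotopy relation
  have hhomA : f * u 0 + u 0 * f = w • 1 := by
    apply S1.end_ext
    intro m
    have rl := S1.Rep.add (S1.Rep.mul (S1.rep_u0 K Ka hK0 m) (S1.rep_f F m))
      (S1.Rep.mul (S1.rep_f F (m - 1)) (S1.rep_u0 K Ka hK0 (m - 1)))
    rw [rl.out, (S1.rep_w_one w (m - 1)).out, S1.hom' F K w hhomotopy m]
  -- recursion relations for smaller indices
  have hSrel : ∀ b, 1 ≤ b → b ≤ a - 1 → S1.SB Ka b + f * u b + u b * f = 0 :=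
    fun b hb1 hb2 => S1.SB_rel F Ka b hb1 (hrec b hb1 hb2)
  have hconv : ∀ b : ℕ, S1.SB Ka b = ∑ p ∈ Finset.HasAntidiagonal.antidiagonal (b - 1), u p.1 * u p.2 :=
    fun b => by
      rw [hu]
      exact Finset.sum_attach (Finset.HasAntidiagonal.antidiagonal (b - 1))
        (fun p => S1.utot Ka p.1 * S1.utot Ka p.2)
  -- key commutation
  have hkey : f * S1.SB Ka a = S1.SB Ka a * f := by
    rw [hconv]
    refine S1.key_comm' (w • 1) (fun x => ?_) f u (a - 1) hhomA
      (fun b h1 h2 => by rw [← hconv]; exact hSrel b h1 h2)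
    rw [smul_mul_assoc, one_mul, mul_smul_comm, mul_one]
  -- previous recursion, composed with the inclusion at i - 1 - 1
  have hprev : (S1.SB Ka a + f * u a + u a * f).comp (S1.ι (i - 1 - 1)) = 0 :=
    S1.Rep.zero (S1.rep_recLHS F Ka a ha (i - 1)) hrecprev
  have e1 : f * (S1.SB Ka a + u a * f) = (S1.SB Ka a + f * u a + u a * f) * f := by
    calc f * (S1.SB Ka a + u a * f) = f * S1.SB Ka a + f * (u a * f) := mul_add _ _ _
      _ = S1.SB Ka a * f + f * u a * f := by rw [hkey, ← mul_assoc]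
      _ = S1.SB Ka a * f + f * u a * f + u a * f * f := by
          rw [mul_assoc (u a), hf2, mul_zero, add_zero]
      _ = (S1.SB Ka a + f * u a + u a * f) * f := by rw [add_mul, add_mul]
  have hzero : (f * (S1.SB Ka a + u a * f)).comp (S1.ι (i - 1)) = 0 := by
    rw [e1, Module.End.mul_eq_comp, LinearMap.comp_assoc, (S1.rep_f F (i - 1)).out,
      ← LinearMap.comp_assoc, hprev, LinearMap.zero_comp]
  have repGoal := S1.Rep.mul
    (S1.Rep.add (S1.rep_SB Ka a ha i)
      (S1.Rep.cast rfl (show i - 1 + 2 * (a : ℤ) = i + 2 * (a : ℤ) - 1 by ring)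
        (S1.Rep.mul (S1.rep_f F (i - 1)) (S1.rep_u Ka a (i - 1)))))
    (S1.rep_f F (i + 2 * (a : ℤ) - 1))
  exact S1.Rep.eq_zero repGoal hzero
end

section
/- Suppose M_i = 0 for all i < −1, every M_i is a projective R-module, F_{j−1} ∘ F_j = 0 for all j ∈ ℤ, the complex is exact at every degree j ≥ 1 (ker F_j = range F_{j+1} for all j ≥ 1), and (K_i)_{i∈ℤ} is a null-homotopy for w. Then there exists a family of R-linear maps K^{(a)}_i : M_{i−1} → M_{i+2a} for all integers a ≥ 1 and i ∈ ℤ such that, setting K^{(0)}_i := K_i, the higher-homotopy recursion Rec(a, i) holds for all a ≥ 1 and all i ∈ ℤ. -/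
namespace Aux

/-! ### ring-level algebra -/
section RingAlg
variable {A : Type*} [Ring A]

def Sg (Kf : ℕ → A) : ℕ → A
  | 0 => 0
  | m + 1 => ∑ p ∈ Finset.HasAntidiagonal.antidiagonal m, Kf p.1 * Kf p.2

theorem Sg_ne (Kf : ℕ → A) {b : ℕ} (hb : b ≠ 0) :
    Sg Kf b = ∑ p ∈ Finset.HasAntidiagonal.antidiagonal (b - 1), Kf p.1 * Kf p.2 := by
  cases b with
  | zero => exact absurd rfl hb
  | succ m => rfl

theorem star_alg (D c : A) (hc : ∀ x : A, c * x = x * c) (Kf : ℕ → A) (n : ℕ)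
    (h : ∀ b, b ≤ n → D * Kf b + Kf b * D = (if b = 0 then c else 0) - Sg Kf b) :
    D * (∑ p ∈ Finset.HasAntidiagonal.antidiagonal n, Kf p.1 * Kf p.2)
      = (∑ p ∈ Finset.HasAntidiagonal.antidiagonal n, Kf p.1 * Kf p.2) * D := by
  classical
  have key : ∀ b, b ≤ n → D * Kf b = (if b = 0 then c else 0) - Sg Kf b - Kf b * D :=
    fun b hb => eq_sub_of_add_eq (h b hb)
  have mem1 : ∀ p : ℕ × ℕ, p ∈ Finset.HasAntidiagonal.antidiagonal n → p.1 ≤ n := by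
    intro p hp; have := Finset.HasAntidiagonal.mem_antidiagonal.mp hp; omega
  have mem2 : ∀ p : ℕ × ℕ, p ∈ Finset.HasAntidiagonal.antidiagonal n → p.2 ≤ n := by
    intro p hp; have := Finset.HasAntidiagonal.mem_antidiagonal.mp hp; omega
  have expand : D * (∑ p ∈ Finset.HasAntidiagonal.antidiagonal n, Kf p.1 * Kf p.2)
      = (∑ p ∈ Finset.HasAntidiagonal.antidiagonal n, (if p.1 = 0 then c else 0) * Kf p.2)
        - (∑ p ∈ Finset.HasAntidiagonal.antidiagonal n, Sg Kf p.1 * Kf p.2)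
        - (∑ p ∈ Finset.HasAntidiagonal.antidiagonal n, Kf p.1 * (if p.2 = 0 then c else 0))
        + (∑ p ∈ Finset.HasAntidiagonal.antidiagonal n, Kf p.1 * Sg Kf p.2)
        + (∑ p ∈ Finset.HasAntidiagonal.antidiagonal n, Kf p.1 * Kf p.2) * D := by
    rw [Finset.mul_sum]
    have e1 : ∀ p ∈ Finset.HasAntidiagonal.antidiagonal n,
        D * (Kf p.1 * Kf p.2)
          = (if p.1 = 0 then c else 0) * Kf p.2 - Sg Kf p.1 * Kf p.2
            - (Kf p.1 * (if p.2 = 0 then c else 0) - Kf p.1 * Sg Kf p.2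
               - Kf p.1 * Kf p.2 * D) := by
      intro p hp
      rw [← mul_assoc, key p.1 (mem1 p hp), sub_mul, sub_mul, mul_assoc,
        key p.2 (mem2 p hp), mul_sub, mul_sub, mul_assoc]
    rw [Finset.sum_congr rfl e1]
    rw [Finset.sum_sub_distrib, Finset.sum_sub_distrib, Finset.sum_sub_distrib,
      Finset.sum_sub_distrib, ← Finset.sum_mul]
    abel
  have hA1 : (∑ p ∈ Finset.HasAntidiagonal.antidiagonal n, (if p.1 = 0 then c else 0) * Kf p.2)
      = c * Kf n := by
    rw [Finset.sum_eq_single (0, n)]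
    · simp
    · intro p hp hne
      have := Finset.HasAntidiagonal.mem_antidiagonal.mp hp
      have : p.1 ≠ 0 := by
        intro h0
        apply hne
        have : p.2 = n := by omega
        exact Prod.ext h0 this
      simp [this]
    · intro habs
      exfalso; exact habs (Finset.HasAntidiagonal.mem_antidiagonal.mpr (by simp))
  have hB1 : (∑ p ∈ Finset.HasAntidiagonal.antidiagonal n, Kf p.1 * (if p.2 = 0 then c else 0))
      = c * Kf n := by
    rw [Finset.sum_eq_single (n, 0)]
    · simp [hc]
    · intro p hp hne
      have := Finset.HasAntidiagonal.mem_antidiagonal.mp hp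
      have : p.2 ≠ 0 := by
        intro h0
        apply hne
        have : p.1 = n := by omega
        exact Prod.ext this h0
      simp [this]
    · intro habs
      exfalso; exact habs (Finset.HasAntidiagonal.mem_antidiagonal.mpr (by simp))
  have hA2B2 : (∑ p ∈ Finset.HasAntidiagonal.antidiagonal n, Sg Kf p.1 * Kf p.2)
      = ∑ p ∈ Finset.HasAntidiagonal.antidiagonal n, Kf p.1 * Sg Kf p.2 := by
    have L1 : (∑ p ∈ Finset.HasAntidiagonal.antidiagonal n, Sg Kf p.1 * Kf p.2)
        = ∑ p ∈ (Finset.HasAntidiagonal.antidiagonal n).filter (fun p : ℕ × ℕ => p.1 ≠ 0),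
            Sg Kf p.1 * Kf p.2 :=
      (Finset.sum_filter_of_ne (by intro p hp h0 hp1; exact h0 (by rw [hp1]; simp [Sg]))).symm
    have R1 : (∑ p ∈ Finset.HasAntidiagonal.antidiagonal n, Kf p.1 * Sg Kf p.2)
        = ∑ p ∈ (Finset.HasAntidiagonal.antidiagonal n).filter (fun p : ℕ × ℕ => p.2 ≠ 0),
            Kf p.1 * Sg Kf p.2 :=
      (Finset.sum_filter_of_ne (by intro p hp h0 hp2; exact h0 (by rw [hp2]; simp [Sg]))).symm
    rw [L1, R1]
    have eL : ∀ p ∈ (Finset.HasAntidiagonal.antidiagonal n).filter (fun p : ℕ × ℕ => p.1 ≠ 0),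
        Sg Kf p.1 * Kf p.2
          = ∑ q ∈ Finset.HasAntidiagonal.antidiagonal (p.1 - 1), Kf q.1 * Kf q.2 * Kf p.2 := by
      intro p hp
      rw [Sg_ne Kf (Finset.mem_filter.mp hp).2, Finset.sum_mul]
    have eR : ∀ p ∈ (Finset.HasAntidiagonal.antidiagonal n).filter (fun p : ℕ × ℕ => p.2 ≠ 0),
        Kf p.1 * Sg Kf p.2
          = ∑ q ∈ Finset.HasAntidiagonal.antidiagonal (p.2 - 1), Kf p.1 * (Kf q.1 * Kf q.2) := by
      intro p hp
      rw [Sg_ne Kf (Finset.mem_filter.mp hp).2, Finset.mul_sum]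
    rw [Finset.sum_congr rfl eL, Finset.sum_congr rfl eR,
      Finset.sum_sigma', Finset.sum_sigma']
    refine Finset.sum_nbij'
      (fun x => ⟨(x.2.1, x.2.2 + x.1.2 + 1), (x.2.2, x.1.2)⟩)
      (fun y => ⟨(y.1.1 + y.2.1 + 1, y.2.2), (y.1.1, y.2.1)⟩) ?_ ?_ ?_ ?_ ?_
    · rintro ⟨⟨a1, a2⟩, ⟨b1, b2⟩⟩ hx
      simp only [Finset.mem_sigma, Finset.mem_filter, Finset.HasAntidiagonal.mem_antidiagonal] at hx ⊢
      omega
    · rintro ⟨⟨a1, a2⟩, ⟨c1, c2⟩⟩ hy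
      simp only [Finset.mem_sigma, Finset.mem_filter, Finset.HasAntidiagonal.mem_antidiagonal] at hy ⊢
      omega
    · rintro ⟨⟨a1, a2⟩, ⟨b1, b2⟩⟩ hx
      simp only [Finset.mem_sigma, Finset.mem_filter, Finset.HasAntidiagonal.mem_antidiagonal] at hx
      have : a1 = b1 + b2 + 1 := by omega
      subst this
      rfl
    · rintro ⟨⟨a1, a2⟩, ⟨c1, c2⟩⟩ hy
      simp only [Finset.mem_sigma, Finset.mem_filter, Finset.HasAntidiagonal.mem_antidiagonal] at hy
      have : a2 = c1 + c2 + 1 := by omega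
      subst this
      rfl
    · rintro ⟨⟨a1, a2⟩, ⟨b1, b2⟩⟩ hx
      exact mul_assoc _ _ _
  rw [expand, hA1, hB1, hA2B2]
  abel
end RingAlg

/-! ### cast toolbox -/
variable {R : Type*} [CommRing R] {M : ℤ → Type*}
    [∀ i, AddCommGroup (M i)] [∀ i, Module R (M i)]

def ecast {i j : ℤ} (h : i = j) : M i →ₗ[R] M j := by subst h; exact LinearMap.id

@[simp] theorem ecast_loop {i : ℤ} (h : i = i) : (ecast (R := R) (M := M) h) = LinearMap.id := rfl

theorem lcast_apply_dom {i i' j : ℤ} (hi : i = i') (f : M i →ₗ[R] M j) (x : M i') :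
    lcast (R := R) (M := M) hi rfl f x = f (ecast (R := R) hi.symm x) := by subst hi; rfl

theorem lcast_self {i j : ℤ} (hi : i = i) (hj : j = j) (f : M i →ₗ[R] M j) :
    lcast hi hj f = f := rfl

theorem lcast_zero {i i' j j' : ℤ} (hi : i = i') (hj : j = j') :
    lcast hi hj (0 : M i →ₗ[R] M j) = 0 := by subst hi; subst hj; rfl

theorem lcast_neg {i i' j j' : ℤ} (hi : i = i') (hj : j = j') (f : M i →ₗ[R] M j) :
    lcast hi hj (-f) = -(lcast hi hj f) := by subst hi; subst hj; rfl

theorem lcast_add {i i' j j' : ℤ} (hi : i = i') (hj : j = j') (f g : M i →ₗ[R] M j) :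
    lcast hi hj (f + g) = lcast hi hj f + lcast hi hj g := by subst hi; subst hj; rfl

theorem lcast_lcast {i j j' j'' : ℤ} (h1 : j = j') (h2 : j' = j'') (f : M i →ₗ[R] M j) :
    lcast rfl h2 (lcast (R := R) (M := M) rfl h1 f) = lcast rfl (h1.trans h2) f := by
  subst h1; subst h2; rfl

theorem lcast_comp_r {d j j' e : ℤ} (h : j = j') (X : M d →ₗ[R] M j) (Y : M e →ₗ[R] M d) :
    (lcast (R := R) (M := M) rfl h X) ∘ₗ Y = lcast rfl h (X ∘ₗ Y) := by subst h; rfl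

/-- any linear map out of a subsingleton module is zero -/
theorem map_of_subsingleton {i j : ℤ} (hs : Subsingleton (M i)) (f : M i →ₗ[R] M j) : f = 0 := by
  ext x
  rw [Subsingleton.elim x 0, map_zero]; rfl

/-! ### direct sum machinery -/
open DirectSum

noncomputable def Hat (τ : ℤ → ℤ) (g : ∀ i, M i →ₗ[R] M (τ i)) :
    (⨁ i, M i) →ₗ[R] ⨁ i, M i :=
  DirectSum.toModule R ℤ _ fun i => (DirectSum.lof R ℤ M (τ i)).comp (g i)

theorem Hat_lof (τ : ℤ → ℤ) (g : ∀ i, M i →ₗ[R] M (τ i)) (i : ℤ) (x : M i) :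
    Hat τ g (DirectSum.lof R ℤ M i x) = DirectSum.lof R ℤ M (τ i) (g i x) := by
  classical
  exact DirectSum.toModule_lof R i x

def Rep (Φ : (⨁ i, M i) →ₗ[R] ⨁ i, M i) {i j : ℤ} (f : M i →ₗ[R] M j) : Prop :=
  Φ ∘ₗ DirectSum.lof R ℤ M i = (DirectSum.lof R ℤ M j) ∘ₗ f

theorem rep_comp {Φ Ψ : (⨁ i, M i) →ₗ[R] ⨁ i, M i} {i j k : ℤ}
    {f : M i →ₗ[R] M j} {g : M j →ₗ[R] M k} (hf : Rep Φ f) (hg : Rep Ψ g) :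
    Rep (Ψ ∘ₗ Φ) (g ∘ₗ f) := by
  unfold Rep at *
  rw [LinearMap.comp_assoc, hf, ← LinearMap.comp_assoc, hg, LinearMap.comp_assoc]

theorem rep_add {Φ Ψ : (⨁ i, M i) →ₗ[R] ⨁ i, M i} {i j : ℤ}
    {f g : M i →ₗ[R] M j} (hf : Rep Φ f) (hg : Rep Ψ g) :
    Rep (Φ + Ψ) (f + g) := by
  unfold Rep at *
  rw [LinearMap.add_comp, LinearMap.comp_add, hf, hg]

theorem rep_zero {i j : ℤ} : Rep (0 : (⨁ i, M i) →ₗ[R] ⨁ i, M i) (0 : M i →ₗ[R] M j) := by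
  unfold Rep; rw [LinearMap.zero_comp, LinearMap.comp_zero]

theorem rep_sum {ι : Type*} {s : Finset ι} {Φ : ι → (⨁ i, M i) →ₗ[R] ⨁ i, M i} {i j : ℤ}
    {f : ι → (M i →ₗ[R] M j)} (h : ∀ p ∈ s, Rep (Φ p) (f p)) :
    Rep (∑ p ∈ s, Φ p) (∑ p ∈ s, f p) := by
  classical
  induction s using Finset.induction with
  | empty => simpa using rep_zero
  | insert _ _ hnotmem ih =>
    rw [Finset.sum_insert hnotmem, Finset.sum_insert hnotmem]
    exact rep_add (h _ (Finset.mem_insert_self _ _))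
      (ih fun p hp => h p (Finset.mem_insert_of_mem hp))

theorem rep_smul {Φ : (⨁ i, M i) →ₗ[R] ⨁ i, M i} {i j : ℤ} (c : R)
    {f : M i →ₗ[R] M j} (hf : Rep Φ f) : Rep (c • Φ) (c • f) := by
  unfold Rep at *
  rw [LinearMap.smul_comp, LinearMap.comp_smul, hf]

theorem rep_id {i : ℤ} :
    Rep (LinearMap.id : (⨁ i, M i) →ₗ[R] ⨁ i, M i) (LinearMap.id : M i →ₗ[R] M i) := by
  unfold Rep; rw [LinearMap.id_comp, LinearMap.comp_id]

theorem rep_lcast {Φ : (⨁ i, M i) →ₗ[R] ⨁ i, M i} {i i' j j' : ℤ}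
    (hi : i = i') (hj : j = j') {f : M i →ₗ[R] M j} (hf : Rep Φ f) :
    Rep Φ (lcast hi hj f) := by
  subst hi; subst hj; exact hf

theorem rep_of_lcast {Φ : (⨁ i, M i) →ₗ[R] ⨁ i, M i} {i i' j j' : ℤ}
    (hi : i = i') (hj : j = j') {f : M i →ₗ[R] M j}
    (hf : Rep Φ (lcast hi hj f)) : Rep Φ f := by
  subst hi; subst hj; exact hf

theorem rep_inj {Φ : (⨁ i, M i) →ₗ[R] ⨁ i, M i} {i j : ℤ}
    {f g : M i →ₗ[R] M j} (hf : Rep Φ f) (hg : Rep Φ g) : f = g := by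
  classical
  ext x
  have h2 := DFunLike.congr_fun (hf.symm.trans hg) x
  simp only [LinearMap.comp_apply] at h2
  have := congrArg (DirectSum.component R ℤ M j) h2
  simpa [DirectSum.component.lof_self] using this

theorem ext_of_rep {Φ Ψ : (⨁ i, M i) →ₗ[R] ⨁ i, M i}
    (h : ∀ j : ℤ, ∃ (k : ℤ) (f : M j →ₗ[R] M k), Rep Φ f ∧ Rep Ψ f) : Φ = Ψ := by
  classical
  apply DirectSum.linearMap_ext
  intro j
  obtain ⟨k, f, h1, h2⟩ := h j
  exact h1.trans h2.symm

/-! ### totalization of the complex data -/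
section WithF
variable (F : ∀ i : ℤ, M i →ₗ[R] M (i - 1))

theorem F_comp_lcast {d j j' : ℤ} (h : j = j') (h2 : j - 1 = j' - 1) (X : M d →ₗ[R] M j) :
    (F j') ∘ₗ lcast (R := R) (M := M) rfl h X = lcast rfl h2 ((F j) ∘ₗ X) := by
  subst h; rfl

noncomputable def TotF : (⨁ i, M i) →ₗ[R] ⨁ i, M i := Hat (fun i => i - 1) F

noncomputable def TotK (b : ℕ) (k : ∀ i : ℤ, M (i - 1) →ₗ[R] M (i + 2 * (b : ℤ))) :
    (⨁ i, M i) →ₗ[R] ⨁ i, M i :=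
  Hat (fun i => i + 1 + 2 * (b : ℤ))
    (fun i => lcast (show i + 1 - 1 = i by ring) rfl (k (i + 1)))

theorem repF (i : ℤ) : Rep (TotF F) (F i) := by
  apply LinearMap.ext
  intro x
  exact Hat_lof (fun i => i - 1) F i x

theorem repK (b : ℕ) (k : ∀ i : ℤ, M (i - 1) →ₗ[R] M (i + 2 * (b : ℤ))) (i : ℤ) :
    Rep (TotK b k) (k i) := by
  have key : ∀ (j i' : ℤ) (h : j + 1 = i') (x : M j),
      DirectSum.lof R ℤ M (j + 1 + 2 * (b : ℤ))
          ((lcast (R := R) (M := M) (show j + 1 - 1 = j by ring) rfl (k (j + 1))) x)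
        = DirectSum.lof R ℤ M (i' + 2 * (b : ℤ))
            (k i' (ecast (R := R) (show j = i' - 1 by omega) x)) := by
    intro j i' h x
    subst h
    rw [lcast_apply_dom]
  apply LinearMap.ext
  intro x
  have h1 := Hat_lof (fun i => i + 1 + 2 * (b : ℤ))
    (fun i => lcast (show i + 1 - 1 = i by ring) rfl (k (i + 1))) (i - 1) x
  have h2 := key (i - 1) i (by ring) x
  simp only [LinearMap.comp_apply]
  rw [show (TotK b k) ((DirectSum.lof R ℤ M (i-1)) x)
      = DirectSum.lof R ℤ M ((i-1) + 1 + 2 * (b : ℤ))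
          ((lcast (show (i-1) + 1 - 1 = (i-1) by ring) rfl (k ((i-1) + 1))) x) from h1,
    h2]
  simp

end WithF
end Aux

namespace Aux
variable {R : Type*} [CommRing R] {M : ℤ → Type*}
    [∀ i, AddCommGroup (M i)] [∀ i, Module R (M i)]
open DirectSum

/-- the sum term of `Rec` -/
noncomputable def gp (KK : ∀ b : ℕ, ∀ i : ℤ, M (i - 1) →ₗ[R] M (i + 2 * (b : ℤ)))
    (a : ℕ) (ha : 1 ≤ a) (i : ℤ) : M (i - 1) →ₗ[R] M (i + 2 * (a : ℤ) - 1) :=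
  ∑ p ∈ (Finset.HasAntidiagonal.antidiagonal (a - 1)).attach,
      lcast rfl
        (show i + 2 * (p.1.2 : ℤ) + 1 + 2 * (p.1.1 : ℤ) = i + 2 * (a : ℤ) - 1 by
          have hp := Finset.HasAntidiagonal.mem_antidiagonal.mp p.2
          omega)
        ((KK p.1.1 (i + 2 * (p.1.2 : ℤ) + 1)).comp
          (lcast rfl (show i + 2 * (p.1.2 : ℤ) = i + 2 * (p.1.2 : ℤ) + 1 - 1 by ring)
            (KK p.1.2 i)))

section WithF
variable (F : ∀ i : ℤ, M i →ₗ[R] M (i - 1))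

theorem rec_iff (KK : ∀ b : ℕ, ∀ i : ℤ, M (i - 1) →ₗ[R] M (i + 2 * (b : ℤ)))
    (a : ℕ) (ha : 1 ≤ a) (i : ℤ) :
    Rec F KK a ha i ↔
      gp KK a ha i + (F (i + 2 * (a : ℤ))).comp (KK a i)
        + lcast rfl (show i - 1 + 2 * (a : ℤ) = i + 2 * (a : ℤ) - 1 by ring)
            ((KK a (i - 1)).comp (F (i - 1)))
      = 0 := Iff.rfl

/-- the total operator of the stage-`a` quadratic term -/
noncomputable def Sop (KK : ∀ b : ℕ, ∀ i : ℤ, M (i - 1) →ₗ[R] M (i + 2 * (b : ℤ)))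
    (a : ℕ) : (⨁ i, M i) →ₗ[R] ⨁ i, M i :=
  ∑ p ∈ Finset.HasAntidiagonal.antidiagonal (a - 1), TotK p.1 (KK p.1) ∘ₗ TotK p.2 (KK p.2)

theorem rep_gp (KK : ∀ b : ℕ, ∀ i : ℤ, M (i - 1) →ₗ[R] M (i + 2 * (b : ℤ)))
    (a : ℕ) (ha : 1 ≤ a) (i : ℤ) :
    Rep (Sop KK a) (gp KK a ha i) := by
  unfold Sop gp
  rw [← Finset.sum_attach (Finset.HasAntidiagonal.antidiagonal (a - 1))
    (fun p => TotK p.1 (KK p.1) ∘ₗ TotK p.2 (KK p.2))]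
  exact rep_sum fun p _ =>
    rep_lcast _ _ (rep_comp (rep_lcast _ _ (repK p.1.2 (KK p.1.2) i))
      (repK p.1.1 (KK p.1.1) (i + 2 * (p.1.2 : ℤ) + 1)))

/-- componentwise recursion implies the total relation. -/
theorem trel_of_rec (KK : ∀ b : ℕ, ∀ i : ℤ, M (i - 1) →ₗ[R] M (i + 2 * (b : ℤ)))
    (a : ℕ) (ha : 1 ≤ a) (h : ∀ i, Rec F KK a ha i) :
    TotF F ∘ₗ TotK a (KK a) + TotK a (KK a) ∘ₗ TotF F + Sop KK a = 0 := by
  apply ext_of_rep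
  intro j
  have r1 : Rep (TotF F ∘ₗ TotK a (KK a))
      ((F (j + 1 + 2 * (a : ℤ))).comp (KK a (j + 1))) :=
    rep_comp (repK a (KK a) (j + 1)) (repF F (j + 1 + 2 * (a : ℤ)))
  have r2 : Rep (TotK a (KK a) ∘ₗ TotF F)
      (lcast rfl (show j + 1 - 1 + 2 * (a : ℤ) = j + 1 + 2 * (a : ℤ) - 1 by ring)
        ((KK a (j + 1 - 1)).comp (F (j + 1 - 1)))) :=
    rep_lcast rfl _ (rep_comp (repF F (j + 1 - 1)) (repK a (KK a) (j + 1 - 1)))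
  have r3 : Rep (Sop KK a) (gp KK a ha (j + 1)) := rep_gp KK a ha (j + 1)
  have comb := rep_add (rep_add r3 r1) r2
  have e0 : TotF F ∘ₗ TotK a (KK a) + TotK a (KK a) ∘ₗ TotF F + Sop KK a
      = Sop KK a + TotF F ∘ₗ TotK a (KK a) + TotK a (KK a) ∘ₗ TotF F := by abel
  have hz := (rec_iff F KK a ha (j + 1)).mp (h (j + 1))
  refine ⟨j + 1 + 2 * (a : ℤ) - 1,
    lcast (show j + 1 - 1 = j by ring) rfl
      (gp KK a ha (j + 1) + (F (j + 1 + 2 * (a : ℤ))).comp (KK a (j + 1))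
        + lcast rfl (show j + 1 - 1 + 2 * (a : ℤ) = j + 1 + 2 * (a : ℤ) - 1 by ring)
            ((KK a (j + 1 - 1)).comp (F (j + 1 - 1)))), ?_, ?_⟩
  · rw [e0]
    exact rep_lcast _ rfl comb
  · rw [hz, lcast_zero]
    exact rep_zero

end WithF
end Aux

namespace Aux
variable {R : Type*} [CommRing R] {M : ℤ → Type*}
    [∀ i, AddCommGroup (M i)] [∀ i, Module R (M i)]
open DirectSum

theorem lcast_lcast' {i i' j j' j'' : ℤ} (hi : i = i') (h1 : j = j') (h2 : j' = j'')
    (f : M i →ₗ[R] M j) :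
    lcast hi h2 (lcast (R := R) (M := M) rfl h1 f) = lcast hi (h1.trans h2) f := by
  subst hi; subst h1; subst h2; rfl

section WithF
variable (F : ∀ i : ℤ, M i →ₗ[R] M (i - 1))

theorem thom (K : ∀ i : ℤ, M (i - 1) →ₗ[R] M i) (w : R)
    (k0 : ∀ i : ℤ, M (i - 1) →ₗ[R] M (i + 2 * ((0 : ℕ) : ℤ)))
    (h0 : ∀ i, k0 i = lcast rfl (show i = i + 2 * ((0 : ℕ) : ℤ) by simp) (K i))
    (hhom : ∀ j : ℤ,
      (K j).comp (F j)
        + lcast (show j + 1 - 1 = j by ring) (show j + 1 - 1 = j by ring)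
            ((F (j + 1)).comp (K (j + 1)))
      = w • (LinearMap.id : M j →ₗ[R] M j)) :
    TotF F ∘ₗ TotK 0 k0 + TotK 0 k0 ∘ₗ TotF F
      = w • (LinearMap.id : (⨁ i, M i) →ₗ[R] ⨁ i, M i) := by
  apply ext_of_rep
  intro j
  refine ⟨j, w • (LinearMap.id : M j →ₗ[R] M j), ?_, rep_smul w rep_id⟩
  rw [← hhom j]
  have r1 : Rep (TotK 0 k0 ∘ₗ TotF F)
      (lcast rfl (show j + 2 * ((0 : ℕ) : ℤ) = j by simp) ((k0 j).comp (F j))) :=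
    rep_lcast rfl _ (rep_comp (repF F j) (repK 0 k0 j))
  have e1 : lcast rfl (show j + 2 * ((0 : ℕ) : ℤ) = j by simp) ((k0 j).comp (F j))
      = (K j).comp (F j) := by
    rw [h0 j, lcast_comp_r, lcast_lcast, lcast_self]
  rw [e1] at r1
  have r2 : Rep (TotF F ∘ₗ TotK 0 k0)
      (lcast (show j + 1 - 1 = j by ring) (show j + 1 + 2 * ((0 : ℕ) : ℤ) - 1 = j by simp)
        ((F (j + 1 + 2 * ((0 : ℕ) : ℤ))).comp (k0 (j + 1)))) :=
    rep_lcast _ _ (rep_comp (repK 0 k0 (j + 1)) (repF F (j + 1 + 2 * ((0 : ℕ) : ℤ))))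
  have e2 : lcast (show j + 1 - 1 = j by ring)
        (show j + 1 + 2 * ((0 : ℕ) : ℤ) - 1 = j by simp)
        ((F (j + 1 + 2 * ((0 : ℕ) : ℤ))).comp (k0 (j + 1)))
      = lcast (show j + 1 - 1 = j by ring) (show j + 1 - 1 = j by ring)
          ((F (j + 1)).comp (K (j + 1))) := by
    rw [h0 (j + 1),
      F_comp_lcast F (show j + 1 = j + 1 + 2 * ((0 : ℕ) : ℤ) by simp)
        (show j + 1 - 1 = j + 1 + 2 * ((0 : ℕ) : ℤ) - 1 by simp),
      lcast_lcast']
  rw [e2] at r2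
  have ecomm : TotF F ∘ₗ TotK 0 k0 + TotK 0 k0 ∘ₗ TotF F
      = TotK 0 k0 ∘ₗ TotF F + TotF F ∘ₗ TotK 0 k0 := by abel
  rw [ecomm]
  exact rep_add r1 r2

/-- the key total commutation `TotF ∘ Sop = Sop ∘ TotF`. -/
theorem star_tot (K : ∀ i : ℤ, M (i - 1) →ₗ[R] M i) (w : R)
    (KK : ∀ b : ℕ, ∀ i : ℤ, M (i - 1) →ₗ[R] M (i + 2 * (b : ℤ)))
    (a : ℕ)
    (h0 : ∀ i, KK 0 i = lcast rfl (show i = i + 2 * ((0 : ℕ) : ℤ) by simp) (K i))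
    (hhom : ∀ j : ℤ,
      (K j).comp (F j)
        + lcast (show j + 1 - 1 = j by ring) (show j + 1 - 1 = j by ring)
            ((F (j + 1)).comp (K (j + 1)))
      = w • (LinearMap.id : M j →ₗ[R] M j))
    (hrec : ∀ b (hb : 1 ≤ b), b ≤ a - 1 → ∀ i, Rec F KK b hb i) :
    TotF F ∘ₗ Sop KK a = Sop KK a ∘ₗ TotF F := by
  have key := star_alg (A := Module.End R (⨁ i, M i)) (TotF F)
    (w • (1 : Module.End R (⨁ i, M i)))
    (by
      intro x
      rw [smul_mul_assoc, mul_smul_comm, one_mul, mul_one])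
    (fun b => TotK b (KK b)) (a - 1)
    (by
      intro b hb
      cases b with
      | zero =>
        simp only [if_pos rfl, Sg, sub_zero]
        have := thom F K w (KK 0) h0 hhom
        simp only [Module.End.mul_eq_comp]
        rw [this]
        rfl
      | succ m =>
        simp only [if_neg (Nat.succ_ne_zero m)]
        have hb1 : 1 ≤ m + 1 := Nat.succ_le_succ (Nat.zero_le m)
        have := trel_of_rec F KK (m + 1) hb1 (hrec (m + 1) hb1 hb)
        have e : Sg (fun b => TotK b (KK b)) (m + 1) = Sop KK (m + 1) := by
          show (∑ p ∈ Finset.HasAntidiagonal.antidiagonal m, TotK p.1 (KK p.1) * TotK p.2 (KK p.2)) = _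
          unfold Sop
          simp only [Module.End.mul_eq_comp]
          rfl
        rw [e]
        simp only [Module.End.mul_eq_comp]
        rw [zero_sub]
        exact eq_neg_of_add_eq_zero_left this)
  show TotF F * Sop KK a = Sop KK a * TotF F
  have e : Sop KK a = ∑ p ∈ Finset.HasAntidiagonal.antidiagonal (a - 1),
      TotK p.1 (KK p.1) * TotK p.2 (KK p.2) := by
    unfold Sop; simp only [Module.End.mul_eq_comp]
  rw [e]
  exact key

/-- componentwise version of `star_tot` for the `gp` maps. -/
theorem cstar (K : ∀ i : ℤ, M (i - 1) →ₗ[R] M i) (w : R)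
    (KK : ∀ b : ℕ, ∀ i : ℤ, M (i - 1) →ₗ[R] M (i + 2 * (b : ℤ)))
    (a : ℕ) (ha : 1 ≤ a)
    (h0 : ∀ i, KK 0 i = lcast rfl (show i = i + 2 * ((0 : ℕ) : ℤ) by simp) (K i))
    (hhom : ∀ j : ℤ,
      (K j).comp (F j)
        + lcast (show j + 1 - 1 = j by ring) (show j + 1 - 1 = j by ring)
            ((F (j + 1)).comp (K (j + 1)))
      = w • (LinearMap.id : M j →ₗ[R] M j))
    (hrec : ∀ b (hb : 1 ≤ b), b ≤ a - 1 → ∀ i, Rec F KK b hb i) (i : ℤ) :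
    (F (i + 2 * (a : ℤ) - 1)).comp (gp KK a ha i)
      = lcast rfl (show i - 1 + 2 * (a : ℤ) - 1 = i + 2 * (a : ℤ) - 1 - 1 by ring)
          ((gp KK a ha (i - 1)).comp (F (i - 1))) := by
  have hstar := star_tot F K w KK a h0 hhom hrec
  have rA : Rep (TotF F ∘ₗ Sop KK a) ((F (i + 2 * (a : ℤ) - 1)).comp (gp KK a ha i)) :=
    rep_comp (rep_gp KK a ha i) (repF F (i + 2 * (a : ℤ) - 1))
  have rB : Rep (Sop KK a ∘ₗ TotF F)
      (lcast rfl (show i - 1 + 2 * (a : ℤ) - 1 = i + 2 * (a : ℤ) - 1 - 1 by ring)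
        ((gp KK a ha (i - 1)).comp (F (i - 1)))) :=
    rep_lcast rfl _ (rep_comp (repF F (i - 1)) (rep_gp KK a ha (i - 1)))
  rw [hstar] at rA
  exact rep_inj rA rB

end WithF
end Aux

namespace Aux
variable {R : Type*} [CommRing R] {M : ℤ → Type*}
    [∀ i, AddCommGroup (M i)] [∀ i, Module R (M i)]
open DirectSum

section WithF
variable (F : ∀ i : ℤ, M i →ₗ[R] M (i - 1))

theorem lift_ex (hproj : ∀ i : ℤ, Module.Projective R (M i))
    (hexact : ∀ j : ℤ, 1 ≤ j →
      LinearMap.ker (F j)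
        = LinearMap.range (lcast rfl (show j + 1 - 1 = j by ring) (F (j + 1))))
    (i : ℤ) (hi : 0 ≤ i) (a : ℕ) (ha : 1 ≤ a)
    (T : M (i - 1) →ₗ[R] M (i + 2 * (a : ℤ) - 1))
    (hT : (F (i + 2 * (a : ℤ) - 1)).comp T = 0) :
    ∃ f : M (i - 1) →ₗ[R] M (i + 2 * (a : ℤ)), (F (i + 2 * (a : ℤ))).comp f = T := by
  have haz : (1 : ℤ) ≤ (a : ℤ) := by exact_mod_cast ha
  have hj : 1 ≤ i + 2 * (a : ℤ) - 1 := by omega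
  have hex := hexact (i + 2 * (a : ℤ) - 1) hj
  set G : M (i + 2 * (a : ℤ) - 1 + 1) →ₗ[R] M (i + 2 * (a : ℤ) - 1) :=
    lcast rfl (show i + 2 * (a : ℤ) - 1 + 1 - 1 = i + 2 * (a : ℤ) - 1 by ring)
      (F (i + 2 * (a : ℤ) - 1 + 1)) with hGdef
  have hmem : ∀ x, T x ∈ LinearMap.range G := by
    intro x
    have h1 : T x ∈ LinearMap.ker (F (i + 2 * (a : ℤ) - 1)) := by
      rw [LinearMap.mem_ker]
      have := LinearMap.congr_fun hT x
      simpa using this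
    rw [hex] at h1
    exact h1
  haveI := hproj (i - 1)
  obtain ⟨h₀, hh₀⟩ := Module.projective_lifting_property G.rangeRestrict
    (T.codRestrict (LinearMap.range G) hmem) (LinearMap.surjective_rangeRestrict G)
  have hG : G ∘ₗ h₀ = T := by
    have h2 := congrArg (fun m => (LinearMap.range G).subtype ∘ₗ m) hh₀
    simp only [← LinearMap.comp_assoc, LinearMap.subtype_comp_codRestrict] at h2
    exact h2
  refine ⟨(ecast (R := R) (show i + 2 * (a : ℤ) - 1 + 1 = i + 2 * (a : ℤ) by ring)) ∘ₗ h₀, ?_⟩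
  have e3 := F_comp_lcast F (show i + 2 * (a : ℤ) - 1 + 1 = i + 2 * (a : ℤ) by ring)
    (show i + 2 * (a : ℤ) - 1 + 1 - 1 = i + 2 * (a : ℤ) - 1 by ring)
    (LinearMap.id (R := R) (M := M (i + 2 * (a : ℤ) - 1 + 1)))
  calc (F (i + 2 * (a : ℤ))) ∘ₗ
        ((ecast (R := R) (show i + 2 * (a : ℤ) - 1 + 1 = i + 2 * (a : ℤ) by ring)) ∘ₗ h₀)
      = ((F (i + 2 * (a : ℤ))) ∘ₗ
          lcast rfl (show i + 2 * (a : ℤ) - 1 + 1 = i + 2 * (a : ℤ) by ring)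
            (LinearMap.id (R := R) (M := M (i + 2 * (a : ℤ) - 1 + 1)))) ∘ₗ h₀ := by
        rw [LinearMap.comp_assoc]; rfl
    _ = (lcast rfl (show i + 2 * (a : ℤ) - 1 + 1 - 1 = i + 2 * (a : ℤ) - 1 by ring)
          ((F (i + 2 * (a : ℤ) - 1 + 1)) ∘ₗ
            LinearMap.id (R := R) (M := M (i + 2 * (a : ℤ) - 1 + 1)))) ∘ₗ h₀ := by
        rw [e3]
    _ = lcast rfl (show i + 2 * (a : ℤ) - 1 + 1 - 1 = i + 2 * (a : ℤ) - 1 by ring)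
          (F (i + 2 * (a : ℤ) - 1 + 1)) ∘ₗ h₀ := by
        rw [LinearMap.comp_id]
    _ = G ∘ₗ h₀ := rfl
    _ = T := hG

end WithF
end Aux

namespace Aux
variable {R : Type*} [CommRing R] {M : ℤ → Type*}
    [∀ i, AddCommGroup (M i)] [∀ i, Module R (M i)]
open DirectSum

section WithF
variable (F : ∀ i : ℤ, M i →ₗ[R] M (i - 1))

/-- weak invariant carried through the inner recursion -/
def Wk (KK : ∀ b : ℕ, ∀ i : ℤ, M (i - 1) →ₗ[R] M (i + 2 * (b : ℤ)))
    (a : ℕ) (ha : 1 ≤ a) (j : ℤ) (f : M (j - 1) →ₗ[R] M (j + 2 * (a : ℤ))) : Prop :=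
  ((F (j + 2 * (a : ℤ))).comp f).comp (F j) = -((gp KK a ha j).comp (F j))

theorem wk_cast (KK : ∀ b : ℕ, ∀ i : ℤ, M (i - 1) →ₗ[R] M (i + 2 * (b : ℤ)))
    (a : ℕ) (ha : 1 ≤ a) {j j' : ℤ} (h : j = j')
    (f : M (j - 1) →ₗ[R] M (j + 2 * (a : ℤ))) (hf : Wk F KK a ha j f) :
    Wk F KK a ha j'
      (lcast (show j - 1 = j' - 1 by rw [h]) (show j + 2 * (a : ℤ) = j' + 2 * (a : ℤ) by rw [h])
        f) := by
  subst h; exact hf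

theorem wk_of (hcomplex : ∀ j : ℤ, (F (j - 1)).comp (F j) = 0)
    (KK : ∀ b : ℕ, ∀ i : ℤ, M (i - 1) →ₗ[R] M (i + 2 * (b : ℤ)))
    (a : ℕ) (ha : 1 ≤ a) (i : ℤ)
    (prev : M (i - 1 - 1) →ₗ[R] M (i - 1 + 2 * (a : ℤ)))
    (f : M (i - 1) →ₗ[R] M (i + 2 * (a : ℤ)))
    (hf : (F (i + 2 * (a : ℤ))).comp f
      = -(gp KK a ha i)
        - lcast rfl (show i - 1 + 2 * (a : ℤ) = i + 2 * (a : ℤ) - 1 by ring)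
            (prev.comp (F (i - 1)))) :
    Wk F KK a ha i f := by
  unfold Wk
  rw [hf, LinearMap.sub_comp, LinearMap.neg_comp, lcast_comp_r, LinearMap.comp_assoc,
    hcomplex i, LinearMap.comp_zero, lcast_zero, sub_zero]

theorem stage
    (hzero : ∀ i : ℤ, i < -1 → Subsingleton (M i))
    (hproj : ∀ i : ℤ, Module.Projective R (M i))
    (hcomplex : ∀ j : ℤ, (F (j - 1)).comp (F j) = 0)
    (hexact : ∀ j : ℤ, 1 ≤ j →
      LinearMap.ker (F j)
        = LinearMap.range (lcast rfl (show j + 1 - 1 = j by ring) (F (j + 1))))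
    (K : ∀ i : ℤ, M (i - 1) →ₗ[R] M i) (w : R)
    (KK : ∀ b : ℕ, ∀ i : ℤ, M (i - 1) →ₗ[R] M (i + 2 * (b : ℤ)))
    (a : ℕ) (ha : 1 ≤ a)
    (h0 : ∀ i, KK 0 i = lcast rfl (show i = i + 2 * ((0 : ℕ) : ℤ) by simp) (K i))
    (hhom : ∀ j : ℤ,
      (K j).comp (F j)
        + lcast (show j + 1 - 1 = j by ring) (show j + 1 - 1 = j by ring)
            ((F (j + 1)).comp (K (j + 1)))
      = w • (LinearMap.id : M j →ₗ[R] M j))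
    (hrec : ∀ b (hb : 1 ≤ b), b ≤ a - 1 → ∀ i, Rec F KK b hb i) :
    ∃ k : ∀ i : ℤ, M (i - 1) →ₗ[R] M (i + 2 * (a : ℤ)),
      ∀ i : ℤ, gp KK a ha i + (F (i + 2 * (a : ℤ))).comp (k i)
          + lcast rfl (show i - 1 + 2 * (a : ℤ) = i + 2 * (a : ℤ) - 1 by ring)
              ((k (i - 1)).comp (F (i - 1))) = 0 := by
  have hcstar := cstar F K w KK a ha h0 hhom hrec
  -- the lifting step
  have ex : ∀ i : ℤ, 0 ≤ i → ∀ prev : M (i - 1 - 1) →ₗ[R] M (i - 1 + 2 * (a : ℤ)),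
      Wk F KK a ha (i - 1) prev →
      ∃ f : M (i - 1) →ₗ[R] M (i + 2 * (a : ℤ)),
        (F (i + 2 * (a : ℤ))).comp f
          = -(gp KK a ha i)
            - lcast rfl (show i - 1 + 2 * (a : ℤ) = i + 2 * (a : ℤ) - 1 by ring)
                (prev.comp (F (i - 1))) := by
    intro i hi prev hw
    apply lift_ex F hproj hexact i hi a ha
    rw [LinearMap.comp_sub, LinearMap.comp_neg,
      hcstar i,
      F_comp_lcast F (show i - 1 + 2 * (a : ℤ) = i + 2 * (a : ℤ) - 1 by ring)
        (show i - 1 + 2 * (a : ℤ) - 1 = i + 2 * (a : ℤ) - 1 - 1 by ring),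
      ← LinearMap.comp_assoc, hw, lcast_neg, sub_neg_eq_add]
    exact neg_add_cancel _
  -- base point of the inner recursion
  have hsub0 : Subsingleton (M (((0 : ℕ) : ℤ) - 1 - 1)) := hzero _ (by omega)
  have hgz : gp KK a ha (((0 : ℕ) : ℤ) - 1) = 0 := map_of_subsingleton hsub0 _
  have hw₀ : Wk F KK a ha (((0 : ℕ) : ℤ) - 1)
      (0 : M (((0 : ℕ) : ℤ) - 1 - 1) →ₗ[R] M (((0 : ℕ) : ℤ) - 1 + 2 * (a : ℤ))) := by
    unfold Wk
    rw [hgz]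
    simp
  -- inner recursion over ℕ
  let inner : ∀ n : ℕ, Σ' f : M ((n : ℤ) - 1) →ₗ[R] M ((n : ℤ) + 2 * (a : ℤ)),
      Wk F KK a ha (n : ℤ) f :=
    Nat.rec
      ⟨Classical.choose (ex ((0 : ℕ) : ℤ) (by omega) 0 hw₀),
        wk_of F hcomplex KK a ha ((0 : ℕ) : ℤ) 0 _
          (Classical.choose_spec (ex ((0 : ℕ) : ℤ) (by omega) 0 hw₀))⟩
      (fun n ih =>
        ⟨Classical.choose (ex (((n + 1 : ℕ)) : ℤ) (by omega)
            (lcast (show (n : ℤ) - 1 = ((n + 1 : ℕ) : ℤ) - 1 - 1 by push_cast; ring)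
              (show (n : ℤ) + 2 * (a : ℤ) = ((n + 1 : ℕ) : ℤ) - 1 + 2 * (a : ℤ) by
                push_cast; ring) ih.1)
            (wk_cast F KK a ha (show (n : ℤ) = ((n + 1 : ℕ) : ℤ) - 1 by push_cast; ring)
              ih.1 ih.2)),
          wk_of F hcomplex KK a ha (((n + 1 : ℕ)) : ℤ) _ _
            (Classical.choose_spec (ex (((n + 1 : ℕ)) : ℤ) (by omega)
              (lcast (show (n : ℤ) - 1 = ((n + 1 : ℕ) : ℤ) - 1 - 1 by push_cast; ring)
                (show (n : ℤ) + 2 * (a : ℤ) = ((n + 1 : ℕ) : ℤ) - 1 + 2 * (a : ℤ) by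
                  push_cast; ring) ih.1)
              (wk_cast F KK a ha (show (n : ℤ) = ((n + 1 : ℕ) : ℤ) - 1 by push_cast; ring)
                ih.1 ih.2)))⟩)
  -- the stage family
  let k : ∀ i : ℤ, M (i - 1) →ₗ[R] M (i + 2 * (a : ℤ)) := fun i =>
    Int.rec (fun n => (inner n).1) (fun _ => 0) i
  have k_nat : ∀ (n : ℕ) (j : ℤ) (h : (n : ℤ) = j),
      k j = lcast (show (n : ℤ) - 1 = j - 1 by rw [h])
        (show (n : ℤ) + 2 * (a : ℤ) = j + 2 * (a : ℤ) by rw [h]) (inner n).1 := by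
    intro n j h
    subst h
    rfl
  have k_neg : ∀ j : ℤ, j < 0 → k j = 0 := by
    intro j hj
    cases j with
    | ofNat n => exact absurd hj (Int.not_lt.mpr (Int.ofNat_nonneg n))
    | negSucc n => rfl
  have main : ∀ n : ℕ,
      (F ((n : ℤ) + 2 * (a : ℤ))).comp (k (n : ℤ))
        = -(gp KK a ha (n : ℤ))
          - lcast rfl (show (n : ℤ) - 1 + 2 * (a : ℤ) = (n : ℤ) + 2 * (a : ℤ) - 1 by ring)
              ((k ((n : ℤ) - 1)).comp (F ((n : ℤ) - 1))) := by
    intro n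
    cases n with
    | zero =>
      rw [k_neg (((0 : ℕ) : ℤ) - 1) (by omega)]
      exact Classical.choose_spec (ex ((0 : ℕ) : ℤ) (by omega) 0 hw₀)
    | succ n =>
      rw [k_nat n (((n + 1 : ℕ) : ℤ) - 1) (by push_cast; ring)]
      exact Classical.choose_spec (ex (((n + 1 : ℕ)) : ℤ) (by omega)
        (lcast (show (n : ℤ) - 1 = ((n + 1 : ℕ) : ℤ) - 1 - 1 by push_cast; ring)
          (show (n : ℤ) + 2 * (a : ℤ) = ((n + 1 : ℕ) : ℤ) - 1 + 2 * (a : ℤ) by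
            push_cast; ring) (inner n).1)
        (wk_cast F KK a ha (show (n : ℤ) = ((n + 1 : ℕ) : ℤ) - 1 by push_cast; ring)
          (inner n).1 (inner n).2))
  refine ⟨k, ?_⟩
  intro i
  rcases lt_or_ge i 0 with hi | hi
  · have hsub : Subsingleton (M (i - 1)) := hzero _ (by omega)
    have h1 : gp KK a ha i = 0 := map_of_subsingleton hsub _
    rw [h1, k_neg i hi, k_neg (i - 1) (by omega), LinearMap.comp_zero,
      LinearMap.zero_comp, lcast_zero]
    simp
  · obtain ⟨n, rfl⟩ : ∃ n : ℕ, (n : ℤ) = i := ⟨i.toNat, Int.toNat_of_nonneg hi⟩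
    rw [main n]
    abel
end WithF
end Aux

namespace Aux
variable {R : Type*} [CommRing R] {M : ℤ → Type*}
    [∀ i, AddCommGroup (M i)] [∀ i, Module R (M i)]
open DirectSum

section WithF
variable (F : ∀ i : ℤ, M i →ₗ[R] M (i - 1))

theorem rec_congr (KK KK' : ∀ b : ℕ, ∀ i : ℤ, M (i - 1) →ₗ[R] M (i + 2 * (b : ℤ)))
    (a : ℕ) (ha : 1 ≤ a) (i : ℤ)
    (h : ∀ b, b ≤ a → KK b = KK' b) (hr : Rec F KK a ha i) : Rec F KK' a ha i := by
  rw [rec_iff] at hr ⊢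
  have hgp : gp KK' a ha i = gp KK a ha i := by
    unfold gp
    apply Finset.sum_congr rfl
    intro p _
    have hm := Finset.HasAntidiagonal.mem_antidiagonal.mp p.2
    rw [← h p.1.1 (by omega), ← h p.1.2 (by omega)]
  rw [hgp, ← h a le_rfl]
  exact hr

theorem rec_update (KK : ∀ b : ℕ, ∀ i : ℤ, M (i - 1) →ₗ[R] M (i + 2 * (b : ℤ)))
    (a : ℕ) (ha : 1 ≤ a) (k : ∀ i : ℤ, M (i - 1) →ₗ[R] M (i + 2 * (a : ℤ)))
    (hk : ∀ i : ℤ, gp KK a ha i + (F (i + 2 * (a : ℤ))).comp (k i)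
          + lcast rfl (show i - 1 + 2 * (a : ℤ) = i + 2 * (a : ℤ) - 1 by ring)
              ((k (i - 1)).comp (F (i - 1))) = 0) :
    ∀ i : ℤ, Rec F (Function.update KK a k) a ha i := by
  intro i
  rw [rec_iff]
  have hgp : gp (Function.update KK a k) a ha i = gp KK a ha i := by
    unfold gp
    apply Finset.sum_congr rfl
    intro p _
    have hm := Finset.HasAntidiagonal.mem_antidiagonal.mp p.2
    rw [Function.update_of_ne (by omega : p.1.1 ≠ a), Function.update_of_ne (by omega : p.1.2 ≠ a)]
  rw [hgp, Function.update_self]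
  exact hk i

def Good (K : ∀ i : ℤ, M (i - 1) →ₗ[R] M i)
    (KK : ∀ b : ℕ, ∀ i : ℤ, M (i - 1) →ₗ[R] M (i + 2 * (b : ℤ))) (A : ℕ) : Prop :=
  (∀ i, KK 0 i = lcast rfl (show i = i + 2 * ((0 : ℕ) : ℤ) by simp) (K i)) ∧
  ∀ b (hb : 1 ≤ b), b ≤ A → ∀ i, Rec F KK b hb i

noncomputable def tower
    (hzero : ∀ i : ℤ, i < -1 → Subsingleton (M i))
    (hproj : ∀ i : ℤ, Module.Projective R (M i))
    (hcomplex : ∀ j : ℤ, (F (j - 1)).comp (F j) = 0)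
    (hexact : ∀ j : ℤ, 1 ≤ j →
      LinearMap.ker (F j)
        = LinearMap.range (lcast rfl (show j + 1 - 1 = j by ring) (F (j + 1))))
    (K : ∀ i : ℤ, M (i - 1) →ₗ[R] M i) (w : R)
    (hhom : ∀ j : ℤ,
      (K j).comp (F j)
        + lcast (show j + 1 - 1 = j by ring) (show j + 1 - 1 = j by ring)
            ((F (j + 1)).comp (K (j + 1)))
      = w • (LinearMap.id : M j →ₗ[R] M j)) :
    ∀ A : ℕ, Σ' KK : ∀ b : ℕ, ∀ i : ℤ, M (i - 1) →ₗ[R] M (i + 2 * (b : ℤ)),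
      Good F K KK A :=
  Nat.rec
    ⟨fun b => Nat.rec
        (motive := fun b => ∀ i : ℤ, M (i - 1) →ₗ[R] M (i + 2 * (b : ℤ)))
        (fun i => lcast rfl (show i = i + 2 * ((0 : ℕ) : ℤ) by simp) (K i))
        (fun _ _ i => 0) b,
      ⟨fun i => rfl, fun b hb hb0 i => (Nat.not_succ_le_zero 0 (hb.trans hb0)).elim⟩⟩
    (fun A ih =>
      ⟨Function.update ih.1 (A + 1)
          (Classical.choose (stage F hzero hproj hcomplex hexact K w ih.1 (A + 1)
            (by omega) ih.2.1 hhom (fun b hb hbA i => ih.2.2 b hb (by omega) i))),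
        by
          constructor
          · intro i
            rw [Function.update_of_ne (by omega : (0 : ℕ) ≠ A + 1)]
            exact ih.2.1 i
          · intro b hb hbA i
            rcases Nat.lt_or_ge b (A + 1) with hlt | hge
            · exact rec_congr F ih.1 _ b hb i
                (fun c hc => (Function.update_of_ne (by omega : c ≠ A + 1) _ _).symm)
                (ih.2.2 b hb (by omega) i)
            · have hbe : b = A + 1 := by omega
              subst hbe
              exact rec_update F ih.1 (A + 1) (by omega)
                (Classical.choose (stage F hzero hproj hcomplex hexact K w ih.1 (A + 1)
                  (by omega) ih.2.1 hhom (fun b hb hbA i => ih.2.2 b hb (by omega) i)))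
                (Classical.choose_spec (stage F hzero hproj hcomplex hexact K w ih.1 (A + 1)
                  (by omega) ih.2.1 hhom (fun b hb hbA i => ih.2.2 b hb (by omega) i))) i⟩)

end WithF
end Aux

namespace Aux
variable {R : Type*} [CommRing R] {M : ℤ → Type*}
    [∀ i, AddCommGroup (M i)] [∀ i, Module R (M i)]

section WithF
variable (F : ∀ i : ℤ, M i →ₗ[R] M (i - 1))

theorem tower_coh
    (hzero : ∀ i : ℤ, i < -1 → Subsingleton (M i))
    (hproj : ∀ i : ℤ, Module.Projective R (M i))
    (hcomplex : ∀ j : ℤ, (F (j - 1)).comp (F j) = 0)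
    (hexact : ∀ j : ℤ, 1 ≤ j →
      LinearMap.ker (F j)
        = LinearMap.range (lcast rfl (show j + 1 - 1 = j by ring) (F (j + 1))))
    (K : ∀ i : ℤ, M (i - 1) →ₗ[R] M i) (w : R)
    (hhom : ∀ j : ℤ,
      (K j).comp (F j)
        + lcast (show j + 1 - 1 = j by ring) (show j + 1 - 1 = j by ring)
            ((F (j + 1)).comp (K (j + 1)))
      = w • (LinearMap.id : M j →ₗ[R] M j))
    (A c : ℕ) (hc : c ≤ A) :
    (tower F hzero hproj hcomplex hexact K w hhom (A + 1)).1 c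
      = (tower F hzero hproj hcomplex hexact K w hhom A).1 c :=
  Function.update_of_ne (by omega : c ≠ A + 1) _ _

end WithF
end Aux

theorem statement2' {R : Type*} [CommRing R] (w : R) {M : ℤ → Type*}
    [∀ i, AddCommGroup (M i)] [∀ i, Module R (M i)]
    (F : ∀ i : ℤ, M i →ₗ[R] M (i - 1))
    (K : ∀ i : ℤ, M (i - 1) →ₗ[R] M i)
    (hzero : ∀ i : ℤ, i < -1 → Subsingleton (M i))
    (hproj : ∀ i : ℤ, Module.Projective R (M i))
    (hcomplex : ∀ j : ℤ, (F (j - 1)).comp (F j) = 0)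
    (hexact : ∀ j : ℤ, 1 ≤ j →
      LinearMap.ker (F j)
        = LinearMap.range (lcast rfl (show j + 1 - 1 = j by ring) (F (j + 1))))
    (hhomotopy : ∀ j : ℤ,
      (K j).comp (F j)
        + lcast (show j + 1 - 1 = j by ring) (show j + 1 - 1 = j by ring)
            ((F (j + 1)).comp (K (j + 1)))
      = w • (LinearMap.id : M j →ₗ[R] M j)) :
    ∃ Ka : ∀ (a : ℕ) (i : ℤ), M (i - 1) →ₗ[R] M (i + 2 * a),
      (∀ i : ℤ, Ka 0 i = lcast rfl (show i = i + 2 * ((0 : ℕ) : ℤ) by simp) (K i)) ∧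
      ∀ (a : ℕ) (ha : 1 ≤ a) (i : ℤ), Rec F Ka a ha i := by
  classical
  set KF : ∀ b : ℕ, ∀ i : ℤ, M (i - 1) →ₗ[R] M (i + 2 * (b : ℤ)) :=
    fun b => (Aux.tower F hzero hproj hcomplex hexact K w hhomotopy b).1 b with hKF
  have coh : ∀ (A b : ℕ), b ≤ A →
      (Aux.tower F hzero hproj hcomplex hexact K w hhomotopy A).1 b = KF b := by
    intro A
    induction A with
    | zero =>
      intro b hb
      have hb0 : b = 0 := Nat.le_zero.mp hb
      subst hb0
      rfl
    | succ A ihA =>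
      intro b hb
      rcases Nat.lt_or_ge b (A + 1) with hlt | hge
      · rw [Aux.tower_coh F hzero hproj hcomplex hexact K w hhomotopy A b (by omega)]
        exact ihA b (by omega)
      · have hbe : b = A + 1 := by omega
        subst hbe
        rfl
  refine ⟨KF, fun i => ?_, fun a ha i => ?_⟩
  · exact (Aux.tower F hzero hproj hcomplex hexact K w hhomotopy 0).2.1 i
  · exact Aux.rec_congr F _ KF a ha i (fun c hc => coh a c hc)
      ((Aux.tower F hzero hproj hcomplex hexact K w hhomotopy a).2.2 a ha le_rfl i)

/-- existence of the higher homotopies. -/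
theorem statement2 {R : Type*} [CommRing R] (w : R) {M : ℤ → Type*}
    [∀ i, AddCommGroup (M i)] [∀ i, Module R (M i)]
    (F : ∀ i : ℤ, M i →ₗ[R] M (i - 1))
    (K : ∀ i : ℤ, M (i - 1) →ₗ[R] M i)
    (hzero : ∀ i : ℤ, i < -1 → Subsingleton (M i))
    (hproj : ∀ i : ℤ, Module.Projective R (M i))
    (hcomplex : ∀ j : ℤ, (F (j - 1)).comp (F j) = 0)
    (hexact : ∀ j : ℤ, 1 ≤ j →
      LinearMap.ker (F j)
        = LinearMap.range (lcast rfl (show j + 1 - 1 = j by ring) (F (j + 1))))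
    (hhomotopy : ∀ j : ℤ,
      (K j).comp (F j)
        + lcast (show j + 1 - 1 = j by ring) (show j + 1 - 1 = j by ring)
            ((F (j + 1)).comp (K (j + 1)))
      = w • (LinearMap.id : M j →ₗ[R] M j)) :
    ∃ Ka : ∀ (a : ℕ) (i : ℤ), M (i - 1) →ₗ[R] M (i + 2 * a),
      (∀ i : ℤ, Ka 0 i = lcast rfl (show i = i + 2 * ((0 : ℕ) : ℤ) by simp) (K i)) ∧
      ∀ (a : ℕ) (ha : 1 ≤ a) (i : ℤ), Rec F Ka a ha i :=
  statement2' w F K hzero hproj hcomplex hexact hhomotopy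
end

section
/- Fix an integer k′ ≥ 0. Suppose F_{j−1} ∘ F_j = 0 for all j, the null-homotopy relations K_j ∘ F_j + F_{j+1} ∘ K_{j+1} = w·id_{M_j} hold for all j ∈ ℤ, the higher-homotopy recursion Rec(a, i) holds for all a ≥ 1 and all i ∈ ℤ, and moreover F_{−1} = 0 and F_{2k′+1} = 0. Define block entries, for 0 ≤ p, q ≤ k′: A_{p,q} := K^{(p−q)}_{2q} : M_{2q−1} → M_{2p} when q ≤ p, A_{p,p+1} := F_{2p+1} : M_{2p+1} → M_{2p} when p < k′, and A_{p,q} := 0 otherwise; B_{q,p} := F_{2p} : M_{2p} → M_{2p−1} when q = p, B_{q,p} := K^{(q−p−1)}_{2p+1} : M_{2p} → M_{2q−1} when q > p, and B_{q,p} := 0 when q < p. Then the block matrices (A, B) form a matrix factorization of w: for all 0 ≤ p, p′ ≤ k′, Σ_{q=0}^{k′} A_{p,q} ∘ B_{q,p′} equals w·id_{M_{2p′}} if p = p′ and 0 otherwise, and for all 0 ≤ q, q′ ≤ k′, Σ_{p=0}^{k′} B_{q,p} ∘ A_{p,q′} equals w·id_{M_{2q′−1}} if q = q′ and 0 otherwise.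 -/
section Aux
variable {R : Type*} [CommRing R] {M : ℤ → Type*}
    [∀ i, AddCommGroup (M i)] [∀ i, Module R (M i)]

/-- Transport of identity. -/
def cst {i j : ℤ} (h : i = j) : M i →ₗ[R] M j := lcast rfl h LinearMap.id

@[simp] lemma cst_self {i : ℤ} (h : i = i) : (cst (R := R) (M := M) h) = LinearMap.id := rfl

@[simp] lemma cst_comp_cst {i j k : ℤ} (h1 : i = j) (h2 : j = k) :
    (cst (R := R) (M := M) h2).comp (cst h1) = cst (h1.trans h2) := by
  subst h1; subst h2; rfl

@[simp] lemma cst_comp_cst_comp {i j k u : ℤ} (h1 : i = j) (h2 : j = k) (f : M u →ₗ[R] M i) :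
    (cst (R := R) (M := M) h2).comp ((cst h1).comp f) = (cst (h1.trans h2)).comp f := by
  subst h1; subst h2; rfl

lemma lcast_eq {i i' j j' : ℤ} (hi : i = i') (hj : j = j') (f : M i →ₗ[R] M j) :
    lcast (R := R) hi hj f = ((cst hj).comp f).comp (cst hi.symm) := by
  subst hi; subst hj; rfl

variable (Ka : ∀ (a : ℕ) (i : ℤ), M (i - 1) →ₗ[R] M (i + 2 * a))
variable (F : ∀ i : ℤ, M i →ₗ[R] M (i - 1))
variable (K : ∀ i : ℤ, M (i - 1) →ₗ[R] M i)

attribute [local simp] lcast_eq LinearMap.comp_assoc LinearMap.id_comp LinearMap.comp_id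

set_option maxHeartbeats 1000000 in
lemma matchKK {a1 a2 b1 b2 : ℕ} {i j s u v : ℤ}
    (hb1 : b1 = a1) (hb2 : b2 = a2) (hj : j = i + 2 * (a2 : ℤ) + 1)
    (hs : i + 2 * (a2 : ℤ) + 1 + 2 * (a1 : ℤ) = s) (hv : s = v)
    (hm : i + 2 * (a2 : ℤ) = i + 2 * (a2 : ℤ) + 1 - 1) (hu : u = i - 1)
    (hA : j + 2 * (b1 : ℤ) = v) (hB1 : i - 1 = u) (hB2 : i + 2 * (b2 : ℤ) = j - 1) :
    (cst hv).comp ((lcast rfl hs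
        ((Ka a1 (i + 2 * (a2 : ℤ) + 1)).comp (lcast rfl hm (Ka a2 i)))).comp (cst hu))
      = (lcast rfl hA (Ka b1 j)).comp (lcast hB1 hB2 (Ka b2 i)) := by
  subst hb1; subst hb2; subst hj; simp

lemma matchKaF {a b : ℕ} {i j s v : ℤ} (hb : b = a) (hj : j = i - 1)
    (hs : i - 1 + 2 * (a : ℤ) = s) (hv : s = v) (hu : j = i - 1)
    (hA : j + 2 * (b : ℤ) = v) (hB : j - 1 = j - 1) :
    (cst hv).comp ((lcast rfl hs ((Ka a (i - 1)).comp (F (i - 1)))).comp (cst hu))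
      = (lcast rfl hA (Ka b j)).comp (lcast rfl hB (F j)) := by
  subst hb; subst hj; simp

lemma matchFKa {a b : ℕ} {i j v w : ℤ} (hb : b = a) (hj : j = i + 2 * (a : ℤ))
    (hv : i + 2 * (a : ℤ) - 1 = v) {u : ℤ} (hu : u = i - 1)
    (hA1 : j = w) (hA2 : j - 1 = v) (hB1 : i - 1 = u) (hB2 : i + 2 * (b : ℤ) = w) :
    (cst hv).comp (((F (i + 2 * (a : ℤ))).comp (Ka a i)).comp (cst hu))
      = (lcast hA1 hA2 (F j)).comp (lcast hB1 hB2 (Ka b i)) := by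
  subst hb; subst hj; simp

lemma matchKK' {a1 a2 b1 b2 : ℕ} {i j s v w : ℤ}
    (hb1 : b1 = a1) (hb2 : b2 = a2) (hj : j = i + 2 * (a2 : ℤ) + 1)
    (hs : i + 2 * (a2 : ℤ) + 1 + 2 * (a1 : ℤ) = s) (hv : s = v)
    (hm : i + 2 * (a2 : ℤ) = i + 2 * (a2 : ℤ) + 1 - 1) (hu : i - 1 = i - 1)
    (hB1 : j - 1 = w) (hB2 : j + 2 * (b1 : ℤ) = v) (hA : i + 2 * (b2 : ℤ) = w) :
    (cst hv).comp ((lcast rfl hs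
        ((Ka a1 (i + 2 * (a2 : ℤ) + 1)).comp (lcast rfl hm (Ka a2 i)))).comp (cst hu))
      = (lcast hB1 hB2 (Ka b1 j)).comp (lcast rfl hA (Ka b2 i)) := by
  subst hb1; subst hb2; subst hj; simp

lemma matchKaF' {a b : ℕ} {i j s u v w : ℤ} (hb : b = a) (hj : j = i - 1)
    (hs : i - 1 + 2 * (a : ℤ) = s) (hv : s = v) (hu : u = i - 1)
    (hA1 : j = u) (hA2 : j - 1 = w) (hB1 : j - 1 = w) (hB2 : j + 2 * (b : ℤ) = v) :
    (cst hv).comp ((lcast rfl hs ((Ka a (i - 1)).comp (F (i - 1)))).comp (cst hu))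
      = (lcast hB1 hB2 (Ka b j)).comp (lcast hA1 hA2 (F j)) := by
  subst hb; subst hj; simp

lemma matchFKa' {a b : ℕ} {i j v : ℤ} (hb : b = a) (hj : j = i + 2 * (a : ℤ))
    (hv : i + 2 * (a : ℤ) - 1 = v) (hu : i - 1 = i - 1)
    (hB : j - 1 = v) (hA : i + 2 * (b : ℤ) = j) :
    (cst hv).comp (((F (i + 2 * (a : ℤ))).comp (Ka a i)).comp (cst hu))
      = (lcast rfl hB (F j)).comp (lcast rfl hA (Ka b i)) := by
  subst hb; subst hj; simp

lemma matchFF {i j v w : ℤ} (hj : j = i - 1)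
    (hA1 : j = w) (hA2 : j - 1 = v) (hB : i - 1 = w)
    (hz : (F (i - 1)).comp (F i) = 0) :
    (lcast hA1 hA2 (F j)).comp (lcast rfl hB (F i)) = 0 := by
  subst hj
  ext x
  simp only [lcast_eq, LinearMap.comp_assoc, cst_comp_cst_comp, cst_comp_cst, cst_self,
    LinearMap.id_comp, LinearMap.comp_id, LinearMap.comp_apply, LinearMap.zero_apply]
  rw [← LinearMap.comp_apply (F (i - 1)) (F i), hz]
  simp

lemma matchFF' {i j v : ℤ} (hi : i = j - 1)
    (hB : i - 1 = v) {u : ℤ} (hA1 : j = u) (hA2 : j - 1 = i)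
    (hz : (F (j - 1)).comp (F j) = 0) :
    (lcast rfl hB (F i)).comp (lcast hA1 hA2 (F j)) = 0 := by
  subst hi
  ext x
  simp only [lcast_eq, LinearMap.comp_assoc, cst_comp_cst_comp, cst_comp_cst, cst_self,
    LinearMap.id_comp, LinearMap.comp_id, LinearMap.comp_apply, LinearMap.zero_apply]
  rw [← LinearMap.comp_apply (F (j - 1)) (F j), hz]
  simp

lemma F_eq_zero_congr {i j : ℤ} (h : i = j) (hz : F i = 0) : F j = 0 := by
  subst h; exact hz

variable (hK0 : ∀ i : ℤ, Ka 0 i = lcast rfl (show i = i + 2 * ((0 : ℕ) : ℤ) by simp) (K i))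

include hK0 in
lemma matchKF {b : ℕ} (hb : b = 0) {i v : ℤ} (hA : i + 2 * (b : ℤ) = v)
    (hB : i - 1 = i - 1) (hv : i = v) :
    (lcast rfl hA (Ka b i)).comp (lcast rfl hB (F i))
      = (cst hv).comp ((K i).comp (F i)) := by
  subst hb; rw [hK0]; simp

include hK0 in
lemma matchFK {b : ℕ} (hb : b = 0) {j v w : ℤ} (hA1 : j + 1 = w) (hA2 : j + 1 - 1 = v)
    (hB1 : j + 1 - 1 = j) (hB2 : j + 1 + 2 * (b : ℤ) = w)
    (hc : j + 1 - 1 = j) (hc' : j + 1 - 1 = j) (hv : j = v) :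
    (lcast hA1 hA2 (F (j + 1))).comp (lcast hB1 hB2 (Ka b (j + 1)))
      = (cst hv).comp (lcast hc hc' ((F (j + 1)).comp (K (j + 1)))) := by
  subst hb; rw [hK0]; simp

include hK0 in
lemma matchFK2 {b : ℕ} (hb : b = 0) {i j v : ℤ} (hi : i = j + 1)
    (hB : i - 1 = v) (hA : i + 2 * (b : ℤ) = i)
    (hc : j + 1 - 1 = j) (hc' : j + 1 - 1 = j) (hu : i - 1 = j) (hv : j = v) :
    (lcast rfl hB (F i)).comp (lcast rfl hA (Ka b i))
      = (cst hv).comp ((lcast hc hc' ((F (j + 1)).comp (K (j + 1)))).comp (cst hu)) := by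
  subst hb; subst hi; rw [hK0]; simp

include hK0 in
lemma matchKF2 {b : ℕ} (hb : b = 0) {i j u v w : ℤ} (hi : i = j)
    (hA1 : i = u) (hA2 : i - 1 = w) (hB1 : i - 1 = w) (hB2 : i + 2 * (b : ℤ) = v)
    (hu : u = j) (hv : j = v) :
    (lcast hB1 hB2 (Ka b i)).comp (lcast hA1 hA2 (F i))
      = (cst hv).comp (((K j).comp (F j)).comp (cst hu)) := by
  subst hb; subst hi; rw [hK0]; simp

end Aux

lemma comp_sum_comp {R : Type*} [CommRing R] {A B C D : Type*}
    [AddCommGroup A] [AddCommGroup B] [AddCommGroup C] [AddCommGroup D]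
    [Module R A] [Module R B] [Module R C] [Module R D]
    {ι : Type*} (s : Finset ι) (f : ι → (B →ₗ[R] C)) (g : A →ₗ[R] B) (h : C →ₗ[R] D) :
    h.comp ((∑ i ∈ s, f i).comp g) = ∑ i ∈ s, h.comp ((f i).comp g) := by
  ext x
  simp [LinearMap.coe_sum, Finset.sum_apply, map_sum]

lemma sum_range_decomp {β : Type*} [AddCommMonoid β] (T : ℕ → β) (k' p p' : ℕ)
    (hp : p ≤ k') (hp' : p' ≤ p)
    (hz : ∀ q, q < p' → T q = 0) (hz' : ∀ q, p + 1 < q → T q = 0) :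
    ∑ q ∈ Finset.range (k' + 1), T q
      = T p' + (∑ q ∈ Finset.Ioc p' p, T q) + (if p < k' then T (p + 1) else 0) := by
  have hsub : Finset.Icc p' (min (p + 1) k') ⊆ Finset.range (k' + 1) := by
    intro q hq; simp only [Finset.mem_Icc, Finset.mem_range] at *; omega
  rw [← Finset.sum_subset hsub (by
    intro q hq hq'
    simp only [Finset.mem_Icc, Finset.mem_range, not_and, not_le] at hq hq'
    rcases lt_or_ge q p' with h | h
    · exact hz q h
    · exact hz' q (by omega))]
  by_cases hpk : p < k'
  · rw [if_pos hpk, show min (p + 1) k' = p + 1 by omega,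
      Finset.Icc_eq_cons_Ioc (by omega), Finset.sum_cons,
      Finset.sum_Ioc_succ_top hp' T, add_assoc]
  · rw [if_neg hpk, show min (p + 1) k' = p by omega,
      Finset.Icc_eq_cons_Ioc hp', Finset.sum_cons, add_zero]

lemma sum_range_decomp' {β : Type*} [AddCommMonoid β] (T : ℕ → β) (k' q q' : ℕ)
    (hq : q ≤ k') (hq' : q' ≤ q)
    (hz : ∀ p, p + 1 < q' → T p = 0) (hz' : ∀ p, q < p → T p = 0) :
    ∑ p ∈ Finset.range (k' + 1), T p
      = (if 1 ≤ q' then T (q' - 1) else 0) + (∑ p ∈ Finset.Ico q' q, T p) + T q := by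
  have hsub : Finset.Icc (q' - 1) q ⊆ Finset.range (k' + 1) := by
    intro x hx; simp only [Finset.mem_Icc, Finset.mem_range] at *; omega
  rw [← Finset.sum_subset hsub (by
    intro x hx hx'
    simp only [Finset.mem_Icc, Finset.mem_range, not_and, not_le] at hx hx'
    rcases lt_or_ge q x with h | h
    · exact hz' x h
    · exact hz x (by omega))]
  have hIcc : ∑ x ∈ Finset.Icc q' q, T x = (∑ p ∈ Finset.Ico q' q, T p) + T q := by
    rw [show Finset.Icc q' q = Finset.Ico q' (q + 1) by rw [Finset.Ico_add_one_right_eq_Icc],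
      Finset.sum_Ico_succ_top hq' T]
  by_cases h1 : 1 ≤ q'
  · rw [if_pos h1, show Finset.Icc (q' - 1) q = Finset.cons (q' - 1) (Finset.Icc q' q) (by
        simp only [Finset.mem_Icc]; omega) from ?_, Finset.sum_cons, hIcc, add_assoc]
    ext x; simp only [Finset.mem_Icc, Finset.cons_eq_insert, Finset.mem_insert, Finset.mem_Icc]
    omega
  · rw [if_neg h1, show q' - 1 = q' by omega, hIcc, zero_add]

/-- The block entry `A_{p,q}` : `M_{2q−1} → M_{2p}`; it is `K^{(p−q)}_{2q}` when
`q ≤ p`, `F_{2p+1}` when `q = p+1` and `p < k′`, and `0` otherwise. -/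
def blockA {R : Type*} [CommRing R] {M : ℤ → Type*}
    [∀ i, AddCommGroup (M i)] [∀ i, Module R (M i)]
    (F : ∀ i : ℤ, M i →ₗ[R] M (i - 1))
    (Ka : ∀ (a : ℕ) (i : ℤ), M (i - 1) →ₗ[R] M (i + 2 * a))
    (k' p q : ℕ) : M (2 * q - 1) →ₗ[R] M (2 * p) :=
  if h : q ≤ p then
    lcast rfl (show 2 * (q : ℤ) + 2 * ((p - q : ℕ) : ℤ) = 2 * (p : ℤ) by omega)
      (Ka (p - q) (2 * q))
  else if h2 : q = p + 1 ∧ p < k' then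
    lcast (show 2 * (p : ℤ) + 1 = 2 * (q : ℤ) - 1 by omega)
      (show 2 * (p : ℤ) + 1 - 1 = 2 * (p : ℤ) by ring)
      (F (2 * p + 1))
  else 0

/-- The block entry `B_{q,p}` : `M_{2p} → M_{2q−1}`; it is `F_{2p}` when `q = p`,
`K^{(q−p−1)}_{2p+1}` when `q > p`, and `0` when `q < p`. -/
def blockB {R : Type*} [CommRing R] {M : ℤ → Type*}
    [∀ i, AddCommGroup (M i)] [∀ i, Module R (M i)]
    (F : ∀ i : ℤ, M i →ₗ[R] M (i - 1))
    (Ka : ∀ (a : ℕ) (i : ℤ), M (i - 1) →ₗ[R] M (i + 2 * a))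
    (q p : ℕ) : M (2 * p) →ₗ[R] M (2 * q - 1) :=
  if h : q = p then
    lcast rfl (show 2 * (p : ℤ) - 1 = 2 * (q : ℤ) - 1 by omega) (F (2 * p))
  else if h2 : p < q then
    lcast (show 2 * (p : ℤ) + 1 - 1 = 2 * (p : ℤ) by ring)
      (show 2 * (p : ℤ) + 1 + 2 * ((q - p - 1 : ℕ) : ℤ) = 2 * (q : ℤ) - 1 by omega)
      (Ka (q - p - 1) (2 * p + 1))
  else 0

section BlockLemmas
variable {R : Type*} [CommRing R] {M : ℤ → Type*}
    [∀ i, AddCommGroup (M i)] [∀ i, Module R (M i)]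
    (F : ∀ i : ℤ, M i →ₗ[R] M (i - 1))
    (Ka : ∀ (a : ℕ) (i : ℤ), M (i - 1) →ₗ[R] M (i + 2 * a))
    {k' p q : ℕ}

lemma blockA_le (h : q ≤ p) :
    blockA F Ka k' p q
      = lcast rfl (show 2 * (q : ℤ) + 2 * ((p - q : ℕ) : ℤ) = 2 * (p : ℤ) by omega)
          (Ka (p - q) (2 * q)) := by
  rw [blockA, dif_pos h]

lemma blockA_succ (h : p < k') :
    blockA F Ka k' p (p + 1)
      = lcast (show 2 * (p : ℤ) + 1 = 2 * ((p + 1 : ℕ) : ℤ) - 1 by push_cast; ring)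
          (show 2 * (p : ℤ) + 1 - 1 = 2 * (p : ℤ) by ring)
          (F (2 * p + 1)) := by
  rw [blockA, dif_neg (by omega), dif_pos ⟨rfl, h⟩]

lemma blockA_zero (h1 : ¬ q ≤ p) (h2 : ¬ (q = p + 1 ∧ p < k')) :
    blockA F Ka k' p q = 0 := by
  rw [blockA, dif_neg h1, dif_neg h2]

lemma blockB_self :
    blockB F Ka p p
      = lcast rfl (show 2 * (p : ℤ) - 1 = 2 * (p : ℤ) - 1 by omega) (F (2 * p)) := by
  rw [blockB, dif_pos rfl]

lemma blockB_gt (h : p < q) :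
    blockB F Ka q p
      = lcast (show 2 * (p : ℤ) + 1 - 1 = 2 * (p : ℤ) by ring)
          (show 2 * (p : ℤ) + 1 + 2 * ((q - p - 1 : ℕ) : ℤ) = 2 * (q : ℤ) - 1 by omega)
          (Ka (q - p - 1) (2 * p + 1)) := by
  rw [blockB, dif_neg (by omega), dif_pos h]

lemma blockB_zero (h : q < p) : blockB F Ka q p = 0 := by
  rw [blockB, dif_neg (by omega), dif_neg (by omega)]

end BlockLemmas

set_option maxHeartbeats 4000000 in
/-- the block matrices `(A, B)` form a matrix factorization of `w`. -/
theorem statement3 {R : Type*} [CommRing R] (w : R) {M : ℤ → Type*}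
    [∀ i, AddCommGroup (M i)] [∀ i, Module R (M i)]
    (F : ∀ i : ℤ, M i →ₗ[R] M (i - 1))
    (K : ∀ i : ℤ, M (i - 1) →ₗ[R] M i)
    (Ka : ∀ (a : ℕ) (i : ℤ), M (i - 1) →ₗ[R] M (i + 2 * a))
    (hK0 : ∀ i : ℤ, Ka 0 i = lcast rfl (show i = i + 2 * ((0 : ℕ) : ℤ) by simp) (K i))
    (k' : ℕ)
    (hcomplex : ∀ j : ℤ, (F (j - 1)).comp (F j) = 0)
    (hhomotopy : ∀ j : ℤ,
      (K j).comp (F j)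
        + lcast (show j + 1 - 1 = j by ring) (show j + 1 - 1 = j by ring)
            ((F (j + 1)).comp (K (j + 1)))
      = w • (LinearMap.id : M j →ₗ[R] M j))
    (hrec : ∀ (a : ℕ) (ha : 1 ≤ a) (i : ℤ), Rec F Ka a ha i)
    (hFneg : F (-1) = 0)
    (hFtop : F (2 * (k' : ℤ) + 1) = 0) :
    (∀ p ≤ k', ∀ p' ≤ k',
      ∑ q ∈ Finset.range (k' + 1),
          (blockA F Ka k' p q).comp (blockB F Ka q p')
        = if h : p = p' then
            lcast rfl (show 2 * (p' : ℤ) = 2 * (p : ℤ) by omega)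
              (w • (LinearMap.id : M (2 * (p' : ℤ)) →ₗ[R] M (2 * (p' : ℤ))))
          else 0) ∧
    (∀ q ≤ k', ∀ q' ≤ k',
      ∑ p ∈ Finset.range (k' + 1),
          (blockB F Ka q p).comp (blockA F Ka k' p q')
        = if h : q = q' then
            lcast rfl (show 2 * (q' : ℤ) - 1 = 2 * (q : ℤ) - 1 by omega)
              (w • (LinearMap.id : M (2 * (q' : ℤ) - 1) →ₗ[R] M (2 * (q' : ℤ) - 1)))
          else 0) := by
  constructor
  · -- A ∘ B
    intro p hp p' hp'
    by_cases hpp : p = p'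
    · -- diagonal case
      subst hpp
      rw [dif_pos rfl]
      have hz1 : ∀ q, q < p → (blockA F Ka k' p q).comp (blockB F Ka q p) = 0 := by
        intro q hq; rw [blockB_zero F Ka hq, LinearMap.comp_zero]
      have hz2 : ∀ q, p + 1 < q → (blockA F Ka k' p q).comp (blockB F Ka q p) = 0 := by
        intro q hq; rw [blockA_zero F Ka (by omega) (by omega), LinearMap.zero_comp]
      rw [sum_range_decomp _ k' p p hp le_rfl hz1 hz2, Finset.Ioc_self, Finset.sum_empty,
        add_zero]
      have hhom := hhomotopy (2 * (p : ℤ))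
      have eA : (blockA F Ka k' p p).comp (blockB F Ka p p)
          = (cst (show (2 : ℤ) * (p : ℤ) = 2 * (p : ℤ) from rfl)).comp
              ((K (2 * (p : ℤ))).comp (F (2 * (p : ℤ)))) := by
        rw [blockA_le F Ka le_rfl, blockB_self F Ka]
        exact matchKF Ka F K hK0 (Nat.sub_self p) _ _ _
      by_cases hpk : p < k'
      · rw [if_pos hpk, eA]
        have eC : (blockA F Ka k' p (p + 1)).comp (blockB F Ka (p + 1) p)
            = (cst (show (2 : ℤ) * (p : ℤ) = 2 * (p : ℤ) from rfl)).comp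
                (lcast (show 2 * (p : ℤ) + 1 - 1 = 2 * (p : ℤ) by ring)
                  (show 2 * (p : ℤ) + 1 - 1 = 2 * (p : ℤ) by ring)
                  ((F (2 * (p : ℤ) + 1)).comp (K (2 * (p : ℤ) + 1)))) := by
          rw [blockA_succ F Ka hpk, blockB_gt F Ka (by omega)]
          exact matchFK Ka F K hK0 (by omega) _ _ _ _ _ _ _
        rw [eC]
        simp only [cst_self, LinearMap.id_comp, lcast_eq, LinearMap.comp_id,
          cst_comp_cst_comp, cst_comp_cst] at hhom ⊢
        convert hhom using 2
      · have hkp : k' = p := by omega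
        subst hkp
        rw [if_neg hpk, add_zero, eA]
        rw [hFtop] at hhom
        simp only [cst_self, LinearMap.id_comp, lcast_eq, LinearMap.comp_id,
          LinearMap.zero_comp, LinearMap.comp_zero, add_zero,
          cst_comp_cst_comp, cst_comp_cst] at hhom ⊢
        convert hhom using 2
    · rw [dif_neg hpp]
      rcases lt_or_gt_of_ne hpp with hlt | hgt
      · -- p < p' : everything vanishes
        apply Finset.sum_eq_zero
        intro q hq
        rcases lt_or_ge q p' with h1 | h1
        · rw [blockB_zero F Ka h1, LinearMap.comp_zero]
        · by_cases h2 : q = p + 1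
          · -- then p' = p + 1 = q
            have hq' : q = p' := by omega
            subst h2
            have hp'' : p' = p + 1 := by omega
            subst hp''
            rw [blockA_succ F Ka (by simp only [Finset.mem_range] at hq; omega),
              blockB_self F Ka]
            exact matchFF F (by push_cast; ring) _ _ _ (hcomplex (2 * ((p + 1 : ℕ) : ℤ)))
          · rw [blockA_zero F Ka (by omega) (by omega), LinearMap.zero_comp]
      · -- p' < p : use the recursion
        have hv : 2 * (p' : ℤ) + 1 + 2 * ((p - p' : ℕ) : ℤ) - 1 = 2 * (p : ℤ) := by omega
        have hu : 2 * (p' : ℤ) = 2 * (p' : ℤ) + 1 - 1 := by ring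
        have key := hrec (p - p') (by omega) (2 * (p' : ℤ) + 1)
        unfold Rec at key
        have key' := congrArg
          (fun f : M (2 * (p' : ℤ) + 1 - 1) →ₗ[R] M (2 * (p' : ℤ) + 1 + 2 * ((p - p' : ℕ) : ℤ) - 1)
            => (cst hv).comp (f.comp (cst hu))) key
        simp only [LinearMap.add_comp, LinearMap.comp_add, comp_sum_comp,
          LinearMap.comp_zero, LinearMap.zero_comp] at key'
        -- decompose the goal sum
        have hz1 : ∀ q, q < p' → (blockA F Ka k' p q).comp (blockB F Ka q p') = 0 := by
          intro q hq; rw [blockB_zero F Ka hq, LinearMap.comp_zero]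
        have hz2 : ∀ q, p + 1 < q → (blockA F Ka k' p q).comp (blockB F Ka q p') = 0 := by
          intro q hq; rw [blockA_zero F Ka (by omega) (by omega), LinearMap.zero_comp]
        rw [sum_range_decomp _ k' p p' hp (by omega) hz1 hz2]
        have eA : (blockA F Ka k' p p').comp (blockB F Ka p' p')
            = (cst hv).comp ((lcast rfl
                (show 2 * (p' : ℤ) + 1 - 1 + 2 * ((p - p' : ℕ) : ℤ)
                    = 2 * (p' : ℤ) + 1 + 2 * ((p - p' : ℕ) : ℤ) - 1 by ring)
                ((Ka (p - p') (2 * (p' : ℤ) + 1 - 1)).comp (F (2 * (p' : ℤ) + 1 - 1)))).comp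
                  (cst hu)) := by
          rw [blockA_le F Ka (by omega), blockB_self F Ka]
          exact (matchKaF Ka F rfl (by ring) _ _ _ (by omega) _).symm
        have eB : (∑ pr ∈ (Finset.HasAntidiagonal.antidiagonal (p - p' - 1)).attach,
              (cst hv).comp ((lcast rfl
                (show 2 * (p' : ℤ) + 1 + 2 * ((pr.1.2 : ℕ) : ℤ) + 1 + 2 * ((pr.1.1 : ℕ) : ℤ)
                    = 2 * (p' : ℤ) + 1 + 2 * ((p - p' : ℕ) : ℤ) - 1 by
                  have hpr := Finset.HasAntidiagonal.mem_antidiagonal.mp pr.2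
                  omega)
                ((Ka pr.1.1 (2 * (p' : ℤ) + 1 + 2 * (pr.1.2 : ℤ) + 1)).comp
                  (lcast rfl (show 2 * (p' : ℤ) + 1 + 2 * (pr.1.2 : ℤ)
                      = 2 * (p' : ℤ) + 1 + 2 * (pr.1.2 : ℤ) + 1 - 1 by ring)
                    (Ka pr.1.2 (2 * (p' : ℤ) + 1))))).comp (cst hu)))
            = ∑ q ∈ Finset.Ioc p' p, (blockA F Ka k' p q).comp (blockB F Ka q p') := by
          refine Finset.sum_bij' (fun pr _ => p' + 1 + pr.1.2)
            (fun q hq => ⟨(p - q, q - p' - 1), Finset.HasAntidiagonal.mem_antidiagonal.mpr (by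
              simp only [Finset.mem_Ioc] at hq; omega)⟩)
            (fun pr _ => by
              have hpr := Finset.HasAntidiagonal.mem_antidiagonal.mp pr.2
              simp only [Finset.mem_Ioc]; omega)
            (fun q hq => Finset.mem_attach _ _)
            (fun pr _ => by
              have hpr := Finset.HasAntidiagonal.mem_antidiagonal.mp pr.2
              beta_reduce
              apply Subtype.ext
              apply Prod.ext
              · show p - (p' + 1 + pr.1.2) = pr.1.1
                omega
              · show p' + 1 + pr.1.2 - p' - 1 = pr.1.2
                omega)
            (fun q hq => by
              simp only [Finset.mem_Ioc] at hq
              beta_reduce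
              show p' + 1 + (q - p' - 1) = q
              omega)
            (fun pr _ => by
              have hpr := Finset.HasAntidiagonal.mem_antidiagonal.mp pr.2
              beta_reduce
              rw [blockA_le F Ka (by omega), blockB_gt F Ka (by omega)]
              exact matchKK Ka (by omega) (by omega) (by push_cast; omega) _ _ _ _
                (by push_cast; omega) _ (by push_cast; omega))
        have eC : (if p < k' then (blockA F Ka k' p (p + 1)).comp (blockB F Ka (p + 1) p')
              else 0)
            = (cst hv).comp
                (((F (2 * (p' : ℤ) + 1 + 2 * ((p - p' : ℕ) : ℤ))).comp
                  (Ka (p - p') (2 * (p' : ℤ) + 1))).comp (cst hu)) := by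
          by_cases hpk : p < k'
          · rw [if_pos hpk, blockA_succ F Ka hpk, blockB_gt F Ka (by omega)]
            exact (matchFKa Ka F (by omega) (by omega) _ _ _ _ _ (by push_cast; omega)).symm
          · rw [if_neg hpk]
            rw [F_eq_zero_congr F (show 2 * (k' : ℤ) + 1
                = 2 * (p' : ℤ) + 1 + 2 * ((p - p' : ℕ) : ℤ) by omega) hFtop]
            simp
        rw [eA, ← eB, eC, ← key']
        abel
  · -- B ∘ A
    intro q hq q' hq'
    by_cases hqq : q = q'
    · -- diagonal case
      subst hqq
      rw [dif_pos rfl]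
      have hz1 : ∀ p, p + 1 < q → (blockB F Ka q p).comp (blockA F Ka k' p q) = 0 := by
        intro p hp2; rw [blockA_zero F Ka (by omega) (by omega), LinearMap.comp_zero]
      have hz2 : ∀ p, q < p → (blockB F Ka q p).comp (blockA F Ka k' p q) = 0 := by
        intro p hp2; rw [blockB_zero F Ka hp2, LinearMap.zero_comp]
      rw [sum_range_decomp' _ k' q q hq le_rfl hz1 hz2, Finset.Ico_self, Finset.sum_empty,
        add_zero]
      by_cases h1 : 1 ≤ q
      · obtain ⟨q0, rfl⟩ : ∃ q0, q = q0 + 1 := ⟨q - 1, by omega⟩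
        rw [if_pos h1]
        have hhom := hhomotopy (2 * ((q0 + 1 : ℕ) : ℤ) - 1)
        have eX : (blockB F Ka (q0 + 1) q0).comp (blockA F Ka k' q0 (q0 + 1))
            = (cst (show 2 * ((q0 + 1 : ℕ) : ℤ) - 1 = 2 * ((q0 + 1 : ℕ) : ℤ) - 1 from rfl)).comp
                (((K (2 * ((q0 + 1 : ℕ) : ℤ) - 1)).comp (F (2 * ((q0 + 1 : ℕ) : ℤ) - 1))).comp
                  (cst (show 2 * ((q0 + 1 : ℕ) : ℤ) - 1 = 2 * ((q0 + 1 : ℕ) : ℤ) - 1 from rfl))) := by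
          rw [blockB_gt F Ka (by omega), blockA_succ F Ka (by omega)]
          exact matchKF2 Ka F K hK0 (by omega) (by omega) _ _ _ _ (by omega) (by omega)
        have eT : (blockB F Ka (q0 + 1) (q0 + 1)).comp (blockA F Ka k' (q0 + 1) (q0 + 1))
            = (cst (show 2 * ((q0 + 1 : ℕ) : ℤ) - 1 = 2 * ((q0 + 1 : ℕ) : ℤ) - 1 from rfl)).comp
                ((lcast (show 2 * ((q0 + 1 : ℕ) : ℤ) - 1 + 1 - 1 = 2 * ((q0 + 1 : ℕ) : ℤ) - 1 by ring)
                    (show 2 * ((q0 + 1 : ℕ) : ℤ) - 1 + 1 - 1 = 2 * ((q0 + 1 : ℕ) : ℤ) - 1 by ring)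
                    ((F (2 * ((q0 + 1 : ℕ) : ℤ) - 1 + 1)).comp (K (2 * ((q0 + 1 : ℕ) : ℤ) - 1 + 1)))).comp
                  (cst (show 2 * ((q0 + 1 : ℕ) : ℤ) - 1 = 2 * ((q0 + 1 : ℕ) : ℤ) - 1 from rfl))) := by
          rw [blockB_self F Ka, blockA_le F Ka le_rfl]
          exact matchFK2 Ka F K hK0 (Nat.sub_self (q0 + 1)) (by ring) _ _ _ _ (by ring) (by ring)
        rw [show (blockB F Ka (q0 + 1) (q0 + 1 - 1)).comp (blockA F Ka k' (q0 + 1 - 1) (q0 + 1))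
            = (blockB F Ka (q0 + 1) q0).comp (blockA F Ka k' q0 (q0 + 1)) from rfl, eX, eT]
        simp only [cst_self, LinearMap.id_comp, lcast_eq, LinearMap.comp_id,
          cst_comp_cst_comp, cst_comp_cst] at hhom ⊢
        convert hhom using 2
      · have hq0 : q = 0 := by omega
        subst hq0
        rw [if_neg h1, zero_add]
        have hhom := hhomotopy (2 * ((0 : ℕ) : ℤ) - 1)
        rw [F_eq_zero_congr F (show (-1 : ℤ) = 2 * ((0 : ℕ) : ℤ) - 1 by norm_num) hFneg,
          LinearMap.comp_zero, zero_add] at hhom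
        have eT : (blockB F Ka 0 0).comp (blockA F Ka k' 0 0)
            = (cst (show 2 * ((0 : ℕ) : ℤ) - 1 = 2 * ((0 : ℕ) : ℤ) - 1 from rfl)).comp
                ((lcast (show 2 * ((0 : ℕ) : ℤ) - 1 + 1 - 1 = 2 * ((0 : ℕ) : ℤ) - 1 by ring)
                    (show 2 * ((0 : ℕ) : ℤ) - 1 + 1 - 1 = 2 * ((0 : ℕ) : ℤ) - 1 by ring)
                    ((F (2 * ((0 : ℕ) : ℤ) - 1 + 1)).comp (K (2 * ((0 : ℕ) : ℤ) - 1 + 1)))).comp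
                  (cst (show 2 * ((0 : ℕ) : ℤ) - 1 = 2 * ((0 : ℕ) : ℤ) - 1 from rfl))) := by
          rw [blockB_self F Ka, blockA_le F Ka le_rfl]
          exact matchFK2 Ka F K hK0 (Nat.sub_self 0) (by ring) _ _ _ _ (by ring) (by ring)
        rw [eT]
        simp only [cst_self, LinearMap.id_comp, lcast_eq, LinearMap.comp_id,
          cst_comp_cst_comp, cst_comp_cst] at hhom ⊢
        convert hhom using 2
    · rw [dif_neg hqq]
      rcases lt_or_gt_of_ne hqq with hlt | hgt
      · -- q < q' : everything vanishes
        apply Finset.sum_eq_zero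
        intro p hpmem
        rcases lt_or_ge q p with h1 | h1
        · rw [blockB_zero F Ka h1, LinearMap.zero_comp]
        · by_cases h2 : q' = p + 1
          · have hpq : p = q := by omega
            subst hpq
            have hq'' : q' = p + 1 := h2
            subst hq''
            rw [blockB_self F Ka, blockA_succ F Ka (by omega)]
            exact matchFF' F (by omega) _ _ _ (hcomplex (2 * (p : ℤ) + 1))
          · rw [blockA_zero F Ka (by omega) (by omega), LinearMap.comp_zero]
      · -- q' < q : use the recursion
        have hv : 2 * (q' : ℤ) + 2 * ((q - q' : ℕ) : ℤ) - 1 = 2 * (q : ℤ) - 1 := by omega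
        have hu : 2 * (q' : ℤ) - 1 = 2 * (q' : ℤ) - 1 := rfl
        have key := hrec (q - q') (by omega) (2 * (q' : ℤ))
        unfold Rec at key
        have key' := congrArg
          (fun f : M (2 * (q' : ℤ) - 1) →ₗ[R] M (2 * (q' : ℤ) + 2 * ((q - q' : ℕ) : ℤ) - 1)
            => (cst hv).comp (f.comp (cst hu))) key
        simp only [LinearMap.add_comp, LinearMap.comp_add, comp_sum_comp,
          LinearMap.comp_zero, LinearMap.zero_comp] at key'
        have hz1 : ∀ p, p + 1 < q' → (blockB F Ka q p).comp (blockA F Ka k' p q') = 0 := by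
          intro p hp2; rw [blockA_zero F Ka (by omega) (by omega), LinearMap.comp_zero]
        have hz2 : ∀ p, q < p → (blockB F Ka q p).comp (blockA F Ka k' p q') = 0 := by
          intro p hp2; rw [blockB_zero F Ka hp2, LinearMap.zero_comp]
        rw [sum_range_decomp' _ k' q q' hq (by omega) hz1 hz2]
        have eX : (if 1 ≤ q' then
              (blockB F Ka q (q' - 1)).comp (blockA F Ka k' (q' - 1) q') else 0)
            = (cst hv).comp ((lcast rfl
                (show 2 * (q' : ℤ) - 1 + 2 * ((q - q' : ℕ) : ℤ)
                    = 2 * (q' : ℤ) + 2 * ((q - q' : ℕ) : ℤ) - 1 by ring)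
                ((Ka (q - q') (2 * (q' : ℤ) - 1)).comp (F (2 * (q' : ℤ) - 1)))).comp
                  (cst hu)) := by
          by_cases h1 : 1 ≤ q'
          · rw [if_pos h1]
            obtain ⟨q0, rfl⟩ : ∃ q0, q' = q0 + 1 := ⟨q' - 1, by omega⟩
            rw [show (blockB F Ka q (q0 + 1 - 1)).comp (blockA F Ka k' (q0 + 1 - 1) (q0 + 1))
              = (blockB F Ka q q0).comp (blockA F Ka k' q0 (q0 + 1)) from rfl]
            rw [blockB_gt F Ka (by omega), blockA_succ F Ka (by omega)]
            exact (matchKaF' Ka F (by omega) (by omega) _ _ _ _ _ _ (by push_cast; omega)).symm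
          · rw [if_neg h1]
            have hq0 : q' = 0 := by omega
            subst hq0
            rw [F_eq_zero_congr F (show (-1 : ℤ) = 2 * ((0 : ℕ) : ℤ) - 1 by norm_num) hFneg]
            simp [lcast_eq]
        have eB : (∑ pr ∈ (Finset.HasAntidiagonal.antidiagonal (q - q' - 1)).attach,
              (cst hv).comp ((lcast rfl
                (show 2 * (q' : ℤ) + 2 * ((pr.1.2 : ℕ) : ℤ) + 1 + 2 * ((pr.1.1 : ℕ) : ℤ)
                    = 2 * (q' : ℤ) + 2 * ((q - q' : ℕ) : ℤ) - 1 by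
                  have hpr := Finset.HasAntidiagonal.mem_antidiagonal.mp pr.2
                  omega)
                ((Ka pr.1.1 (2 * (q' : ℤ) + 2 * (pr.1.2 : ℤ) + 1)).comp
                  (lcast rfl (show 2 * (q' : ℤ) + 2 * (pr.1.2 : ℤ)
                      = 2 * (q' : ℤ) + 2 * (pr.1.2 : ℤ) + 1 - 1 by ring)
                    (Ka pr.1.2 (2 * (q' : ℤ)))))).comp (cst hu)))
            = ∑ p ∈ Finset.Ico q' q, (blockB F Ka q p).comp (blockA F Ka k' p q') := by
          refine Finset.sum_bij' (fun pr _ => q' + pr.1.2)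
            (fun p hp2 => ⟨(q - p - 1, p - q'), Finset.HasAntidiagonal.mem_antidiagonal.mpr (by
              simp only [Finset.mem_Ico] at hp2; omega)⟩)
            (fun pr _ => by
              have hpr := Finset.HasAntidiagonal.mem_antidiagonal.mp pr.2
              simp only [Finset.mem_Ico]; omega)
            (fun p hp2 => Finset.mem_attach _ _)
            (fun pr _ => by
              have hpr := Finset.HasAntidiagonal.mem_antidiagonal.mp pr.2
              beta_reduce
              apply Subtype.ext
              apply Prod.ext
              · show q - (q' + pr.1.2) - 1 = pr.1.1
                omega
              · show q' + pr.1.2 - q' = pr.1.2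
                omega)
            (fun p hp2 => by
              simp only [Finset.mem_Ico] at hp2
              beta_reduce
              show q' + (p - q') = p
              omega)
            (fun pr _ => by
              have hpr := Finset.HasAntidiagonal.mem_antidiagonal.mp pr.2
              beta_reduce
              rw [blockB_gt F Ka (by omega), blockA_le F Ka (by omega)]
              exact matchKK' Ka (by omega) (by omega) (by push_cast; omega) _ _ _ _
                (by push_cast; omega) _ (by push_cast; omega))
        have eT : (blockB F Ka q q).comp (blockA F Ka k' q q')
            = (cst hv).comp
                (((F (2 * (q' : ℤ) + 2 * ((q - q' : ℕ) : ℤ))).comp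
                  (Ka (q - q') (2 * (q' : ℤ)))).comp (cst hu)) := by
          rw [blockB_self F Ka, blockA_le F Ka (by omega)]
          exact (matchFKa' Ka F rfl (by omega) _ _ (by omega) _).symm
        rw [eX, ← eB, eT, ← key']
        abel
end

section
/- Let w ∈ R be a nonzerodivisor and let (A, B) be a matrix factorization of w of size n that is an asymptotically periodic presentation with levels a, b : Fin n → ℕ and shift d ∈ ℕ. Assume moreover that for all s ∈ R and k ∈ ℕ, if w·s ∈ P^{d+k} then s ∈ P^k. Then for every k ∈ ℕ the induced two-periodic sequence is exact modulo w: for every vector v : Fin n → R with v_j ∈ P^{b_j + k} for all j and with every component of B·v lying in the principal ideal (w), there exists u : Fin n → R with u_j ∈ P^{a_j + k} for all j and v = A·u. -/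
/-- exactness modulo `w` of the two-periodic sequence induced by an
asymptotically periodic matrix factorization. -/
theorem statement8 {R : Type*} [CommRing R] (P : Ideal R) (w : R)
    (hw : ∀ r : R, w * r = 0 → r = 0)
    {n : ℕ} (A B : Matrix (Fin n) (Fin n) R)
    (hAB : A * B = w • (1 : Matrix (Fin n) (Fin n) R))
    (hBA : B * A = w • (1 : Matrix (Fin n) (Fin n) R))
    (a b : Fin n → ℕ) (d : ℕ)
    (hA : ∀ i j, A i j ∈ P.zpowNat ((b i : ℤ) - (a j : ℤ)))
    (hB : ∀ i j, B i j ∈ P.zpowNat ((a i : ℤ) + (d : ℤ) - (b j : ℤ)))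
    (hreg : ∀ (s : R) (k : ℕ), w * s ∈ P ^ (d + k) → s ∈ P ^ k) :
    ∀ (k : ℕ) (v : Fin n → R),
      (∀ j, v j ∈ P ^ (b j + k)) →
      (∀ i, B.mulVec v i ∈ Ideal.span {w}) →
      ∃ u : Fin n → R, (∀ j, u j ∈ P ^ (a j + k)) ∧ v = A.mulVec u := by
  intro k v hv hBv
  -- choose u with B.mulVec v i = w * u i
  have hchoice : ∀ i, ∃ c : R, B.mulVec v i = w * c := by
    intro i
    rcases (Ideal.mem_span_singleton.mp (hBv i)) with ⟨c, hc⟩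
    exact ⟨c, hc⟩
  choose u hu using hchoice
  have hBvmem : ∀ i, B.mulVec v i ∈ P ^ (d + (a i + k)) := by
    intro i
    rw [Matrix.mulVec, dotProduct]
    apply Ideal.sum_mem
    intro j _
    have h1 := hB i j
    have h2 := hv j
    have hle : ((a i : ℤ) + d - b j).toNat + (b j + k) ≥ d + (a i + k) := by
      have := Int.self_le_toNat ((a i : ℤ) + d - b j)
      omega
    have : B i j * v j ∈ P ^ (((a i : ℤ) + d - b j).toNat + (b j + k)) := by
      rw [pow_add]
      exact Ideal.mul_mem_mul h1 h2
    exact Ideal.pow_le_pow_right hle this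
  have humem : ∀ i, u i ∈ P ^ (a i + k) := by
    intro i
    apply hreg
    rw [← hu i]
    exact hBvmem i
  refine ⟨u, humem, ?_⟩
  have hABv : A.mulVec (B.mulVec v) = w • v := by
    rw [Matrix.mulVec_mulVec, hAB, Matrix.smul_mulVec, Matrix.one_mulVec]
  have hBu : B.mulVec v = w • u := by
    funext i; exact hu i
  have hAu : A.mulVec (B.mulVec v) = w • A.mulVec u := by
    rw [hBu, Matrix.mulVec_smul]
  funext i
  have : w * (v i - A.mulVec u i) = 0 := by
    have h1 : w • v = w • A.mulVec u := by rw [← hABv, hAu]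
    have h2 : w * v i = w * A.mulVec u i := congrFun h1 i
    rw [mul_sub, h2, sub_self]
  exact sub_eq_zero.mp (hw _ this)
end

section
/- Let d ∈ ℕ, let (A, B) be an asymptotically periodic presentation of size n with levels a, b : Fin n → ℕ and shift d, and let (A′, B′) be an asymptotically periodic presentation of size n′ with levels a′, b′ : Fin n′ → ℕ and the same shift d. Let E and F be arbitrary n×n′ matrices over R and form the block matrices A″ = [[A, E],[0, A′]] and B″ = [[B, F],[0, B′]] of size n+n′. Then there exists k₀ ∈ ℕ such that for all k ≥ k₀ the pair (A″, B″) is an asymptotically periodic presentation with levels (a, a′+k) and (b, b′+k) and shift d: for every pair (x, x′) with x_i ∈ P^{a_i} for all i and x′_j ∈ P^{a′_j + k} for all j, the vector A″·(x, x′) has its first n components in P^{b_i} and last n′ components in P^{b′_j + k}; and for every (y, y′) with y_i ∈ P^{b_i} and y′_j ∈ P^{b′_j + k}, the vector B″·(y, y′) has its first n components in P^{a_i + d} and last n′ components in P^{a′_j + k + d}. -/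
lemma mul_mem_pow_aux {R : Type*} [CommRing R] (P : Ideal R) {m l e : ℕ}
    (h : e ≤ m + l) {u v : R} (hu : u ∈ P ^ m) (hv : v ∈ P ^ l) :
    u * v ∈ P ^ e :=
  Ideal.pow_le_pow_right h (by rw [pow_add]; exact Ideal.mul_mem_mul hu hv)

/-- block extensions of asymptotically periodic presentations are
asymptotically periodic after a sufficiently large shift of the second levels. -/
theorem statement9 {R : Type*} [CommRing R] (P : Ideal R)
    {n n' : ℕ} (d : ℕ)
    (A B : Matrix (Fin n) (Fin n) R) (A' B' : Matrix (Fin n') (Fin n') R)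
    (a b : Fin n → ℕ) (a' b' : Fin n' → ℕ)
    (hA : ∀ i j, A i j ∈ P.zpowNat ((b i : ℤ) - (a j : ℤ)))
    (hB : ∀ i j, B i j ∈ P.zpowNat ((a i : ℤ) + (d : ℤ) - (b j : ℤ)))
    (hA' : ∀ i j, A' i j ∈ P.zpowNat ((b' i : ℤ) - (a' j : ℤ)))
    (hB' : ∀ i j, B' i j ∈ P.zpowNat ((a' i : ℤ) + (d : ℤ) - (b' j : ℤ)))
    (E F : Matrix (Fin n) (Fin n') R) :
    ∃ k₀ : ℕ, ∀ k : ℕ, k₀ ≤ k →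
      (∀ (x : Fin n → R) (x' : Fin n' → R),
        (∀ i, x i ∈ P ^ (a i)) → (∀ j, x' j ∈ P ^ (a' j + k)) →
        (∀ i, (Matrix.fromBlocks A E 0 A').mulVec (Sum.elim x x') (Sum.inl i)
            ∈ P ^ (b i)) ∧
        (∀ j, (Matrix.fromBlocks A E 0 A').mulVec (Sum.elim x x') (Sum.inr j)
            ∈ P ^ (b' j + k))) ∧
      (∀ (y : Fin n → R) (y' : Fin n' → R),
        (∀ i, y i ∈ P ^ (b i)) → (∀ j, y' j ∈ P ^ (b' j + k)) →
        (∀ i, (Matrix.fromBlocks B F 0 B').mulVec (Sum.elim y y') (Sum.inl i)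
            ∈ P ^ (a i + d)) ∧
        (∀ j, (Matrix.fromBlocks B F 0 B').mulVec (Sum.elim y y') (Sum.inr j)
            ∈ P ^ (a' j + k + d))) := by
  refine ⟨Finset.univ.sup (fun i : Fin n => max (b i) (a i + d)), fun k hk => ?_⟩
  have hmax : ∀ i : Fin n, max (b i) (a i + d) ≤ k := fun i =>
    le_trans (Finset.le_sup (f := fun i : Fin n => max (b i) (a i + d))
      (Finset.mem_univ i)) hk
  have hbk : ∀ i : Fin n, b i ≤ k := fun i => le_trans (le_max_left _ _) (hmax i)
  have hadk : ∀ i : Fin n, a i + d ≤ k := fun i => le_trans (le_max_right _ _) (hmax i)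
  have hA2 : ∀ i j, A i j ∈ P ^ ((b i : ℤ) - (a j : ℤ)).toNat := hA
  have hB2 : ∀ i j, B i j ∈ P ^ ((a i : ℤ) + (d : ℤ) - (b j : ℤ)).toNat := hB
  have hA2' : ∀ i j, A' i j ∈ P ^ ((b' i : ℤ) - (a' j : ℤ)).toNat := hA'
  have hB2' : ∀ i j, B' i j ∈ P ^ ((a' i : ℤ) + (d : ℤ) - (b' j : ℤ)).toNat := hB'
  constructor
  · intro x x' hx hx'
    constructor
    · intro i
      simp only [Matrix.mulVec, dotProduct, Fintype.sum_sum_type,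
        Matrix.fromBlocks_apply₁₁, Matrix.fromBlocks_apply₁₂, Sum.elim_inl, Sum.elim_inr]
      refine Ideal.add_mem _ ?_ ?_
      · exact Ideal.sum_mem _ fun j _ =>
          mul_mem_pow_aux P (by omega) (hA2 i j) (hx j)
      · exact Ideal.sum_mem _ fun j _ =>
          mul_mem_pow_aux P (m := 0) (by have := hbk i; omega) (by simp) (hx' j)
    · intro j
      simp only [Matrix.mulVec, dotProduct, Fintype.sum_sum_type,
        Matrix.fromBlocks_apply₂₁, Matrix.fromBlocks_apply₂₂, Sum.elim_inl, Sum.elim_inr,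
        Matrix.zero_apply, zero_mul, Finset.sum_const_zero, zero_add]
      exact Ideal.sum_mem _ fun l _ =>
        mul_mem_pow_aux P (by omega) (hA2' j l) (hx' l)
  · intro y y' hy hy'
    constructor
    · intro i
      simp only [Matrix.mulVec, dotProduct, Fintype.sum_sum_type,
        Matrix.fromBlocks_apply₁₁, Matrix.fromBlocks_apply₁₂, Sum.elim_inl, Sum.elim_inr]
      refine Ideal.add_mem _ ?_ ?_
      · exact Ideal.sum_mem _ fun j _ =>
          mul_mem_pow_aux P (by omega) (hB2 i j) (hy j)
      · exact Ideal.sum_mem _ fun j _ =>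
          mul_mem_pow_aux P (m := 0) (by have := hadk i; omega) (by simp) (hy' j)
    · intro j
      simp only [Matrix.mulVec, dotProduct, Fintype.sum_sum_type,
        Matrix.fromBlocks_apply₂₁, Matrix.fromBlocks_apply₂₂, Sum.elim_inl, Sum.elim_inr,
        Matrix.zero_apply, zero_mul, Finset.sum_const_zero, zero_add]
      exact Ideal.sum_mem _ fun l _ =>
        mul_mem_pow_aux P (by omega) (hB2' j l) (hy' l)
end

section
/- Let a, b be integers with b ≥ a > 2 and set w = x^a + y^b, A = [[x^{a−1}, y^{b−1}],[y, −x]], and B = [[x, y^{b−1}],[y, −x^{a−1}]]. Then (A, B) is a matrix factorization of w (A·B = B·A = w·1), and it is asymptotically periodic with levels α = (1,1), β = (a,2) and shift d = a: for all f, g ∈ P one has x^{a−1}f + y^{b−1}g ∈ P^a and yf − xg ∈ P², and for all f′ ∈ P^a and g′ ∈ P² one has xf′ + y^{b−1}g′ ∈ P^{1+a} and yf′ − x^{a−1}g′ ∈ P^{1+a}. -/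
lemma mulMemAux {R : Type*} [CommRing R] {P : Ideal R} {u f : R} {m n N : ℕ}
    (hu : u ∈ P ^ m) (hf : f ∈ P ^ n) (h : N ≤ m + n) : u * f ∈ P ^ N :=
  Ideal.pow_le_pow_right h (by rw [pow_add]; exact Ideal.mul_mem_mul hu hf)

/-- the standard matrix factorization of `x^a + y^b` is
asymptotically periodic with levels `(1,1)`, `(a,2)` and shift `d = a`. -/
theorem statement10 {k : Type*} [Field k] (a b : ℕ) (ha : 2 < a) (hab : a ≤ b) :
    let x : MvPolynomial (Fin 2) k := MvPolynomial.X 0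
    let y : MvPolynomial (Fin 2) k := MvPolynomial.X 1
    let w := x ^ a + y ^ b
    let P : Ideal (MvPolynomial (Fin 2) k) := Ideal.span {x, y}
    let A : Matrix (Fin 2) (Fin 2) (MvPolynomial (Fin 2) k) :=
      !![x ^ (a - 1), y ^ (b - 1); y, -x]
    let B : Matrix (Fin 2) (Fin 2) (MvPolynomial (Fin 2) k) :=
      !![x, y ^ (b - 1); y, -(x ^ (a - 1))]
    (A * B = w • (1 : Matrix (Fin 2) (Fin 2) (MvPolynomial (Fin 2) k)) ∧
      B * A = w • (1 : Matrix (Fin 2) (Fin 2) (MvPolynomial (Fin 2) k))) ∧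
    (∀ f ∈ P, ∀ g ∈ P,
      x ^ (a - 1) * f + y ^ (b - 1) * g ∈ P ^ a ∧ y * f - x * g ∈ P ^ 2) ∧
    (∀ f' ∈ P ^ a, ∀ g' ∈ P ^ 2,
      x * f' + y ^ (b - 1) * g' ∈ P ^ (1 + a) ∧
      y * f' - x ^ (a - 1) * g' ∈ P ^ (1 + a)) := by
  intro x y w P A B
  obtain ⟨m, rfl⟩ : ∃ m, a = m + 1 := ⟨a - 1, by omega⟩
  obtain ⟨n, rfl⟩ : ∃ n, b = n + 1 := ⟨b - 1, by omega⟩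
  simp only [Nat.add_sub_cancel] at *
  have hxP : x ∈ P ^ 1 := by
    rw [pow_one]; exact Ideal.subset_span (by simp)
  have hyP : y ∈ P ^ 1 := by
    rw [pow_one]; exact Ideal.subset_span (by simp)
  have hxa : x ^ m ∈ P ^ m := by
    simpa using Ideal.pow_mem_pow (by simpa using hxP) m
  have hyb : y ^ n ∈ P ^ n := by
    simpa using Ideal.pow_mem_pow (by simpa using hyP) n
  refine ⟨⟨?_, ?_⟩, ?_, ?_⟩
  · apply Matrix.ext
    intro i j
    fin_cases i <;> fin_cases j <;>
      simp [A, B, w, Matrix.mul_apply, Fin.sum_univ_two, Matrix.one_apply] <;>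
      ring
  · apply Matrix.ext
    intro i j
    fin_cases i <;> fin_cases j <;>
      simp [A, B, w, Matrix.mul_apply, Fin.sum_univ_two, Matrix.one_apply] <;>
      ring
  · intro f hf g hg
    rw [← pow_one P] at hf hg
    exact ⟨add_mem (mulMemAux hxa hf (by omega)) (mulMemAux hyb hg (by omega)),
      sub_mem (mulMemAux hyP hf (by omega)) (mulMemAux hxP hg (by omega))⟩
  · intro f' hf' g' hg'
    exact ⟨add_mem (mulMemAux hxP hf' (by omega)) (mulMemAux hyb hg' (by omega)),
      sub_mem (mulMemAux hyP hf' (by omega)) (mulMemAux hxa hg' (by omega))⟩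
end

section
/- Let a, b be integers with b ≥ a > 2, set w = x^a + y^b, A′ = [[x^{a−1}+y, y^{b−1}−x],[y, −x]], and B′ = [[x, y^{b−1}−x],[y, −x^{a−1}−y]]. Then (A′, B′) is a matrix factorization of w (A′·B′ = B′·A′ = w·1), but it admits no asymptotically periodic presentation with shift d = a: there exist no positive integers α₁, α₂, β₁, β₂ such that for all f ∈ P^{α₁} and g ∈ P^{α₂} one has (x^{a−1}+y)f + (y^{b−1}−x)g ∈ P^{β₁} and yf − xg ∈ P^{β₂}, and for all f′ ∈ P^{β₁} and g′ ∈ P^{β₂} one has xf′ + (y^{b−1}−x)g′ ∈ P^{α₁+a} and yf′ − (x^{a−1}+y)g′ ∈ P^{α₂+a}. -/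
/-- an equivalent matrix factorization of `x^a + y^b` which admits
no asymptotically periodic presentation with shift `d = a`. -/
theorem statement11 {k : Type*} [Field k] (a b : ℕ) (ha : 2 < a) (hab : a ≤ b) :
    let x : MvPolynomial (Fin 2) k := MvPolynomial.X 0
    let y : MvPolynomial (Fin 2) k := MvPolynomial.X 1
    let w := x ^ a + y ^ b
    let P : Ideal (MvPolynomial (Fin 2) k) := Ideal.span {x, y}
    let A' : Matrix (Fin 2) (Fin 2) (MvPolynomial (Fin 2) k) :=
      !![x ^ (a - 1) + y, y ^ (b - 1) - x; y, -x]
    let B' : Matrix (Fin 2) (Fin 2) (MvPolynomial (Fin 2) k) :=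
      !![x, y ^ (b - 1) - x; y, -(x ^ (a - 1)) - y]
    (A' * B' = w • (1 : Matrix (Fin 2) (Fin 2) (MvPolynomial (Fin 2) k)) ∧
      B' * A' = w • (1 : Matrix (Fin 2) (Fin 2) (MvPolynomial (Fin 2) k))) ∧
    ¬ ∃ α₁ α₂ β₁ β₂ : ℕ, 0 < α₁ ∧ 0 < α₂ ∧ 0 < β₁ ∧ 0 < β₂ ∧
      (∀ f ∈ P ^ α₁, ∀ g ∈ P ^ α₂,
        (x ^ (a - 1) + y) * f + (y ^ (b - 1) - x) * g ∈ P ^ β₁ ∧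
        y * f - x * g ∈ P ^ β₂) ∧
      (∀ f' ∈ P ^ β₁, ∀ g' ∈ P ^ β₂,
        x * f' + (y ^ (b - 1) - x) * g' ∈ P ^ (α₁ + a) ∧
        y * f' - (x ^ (a - 1) + y) * g' ∈ P ^ (α₂ + a)) := by
  intro x y w P A' B'
  have hx : x ^ (a - 1) * x = x ^ a := by rw [← pow_succ]; congr 1; omega
  have hy : y ^ (b - 1) * y = y ^ b := by rw [← pow_succ]; congr 1; omega
  constructor
  · constructor <;>
    · refine Matrix.ext fun i j => ?_
      fin_cases i <;> fin_cases j <;>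
        simp [A', B', w, Matrix.mul_apply, Fin.sum_univ_two, Matrix.one_apply] <;>
        first
          | ring1
          | linear_combination hx + hy
  · rintro ⟨α₁, α₂, β₁, β₂, hα₁, hα₂, hβ₁, hβ₂, hfwd, hbwd⟩
    set φ : MvPolynomial (Fin 2) k →+* Polynomial k :=
      (MvPolynomial.aeval (fun _ : Fin 2 => (Polynomial.X : Polynomial k))).toRingHom with hφ
    have hφx : φ x = Polynomial.X := by simp [hφ, x]
    have hφy : φ y = Polynomial.X := by simp [hφ, y]
    have key : ∀ (n : ℕ) (p : MvPolynomial (Fin 2) k), p ∈ P ^ n →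
        (Polynomial.X : Polynomial k) ^ n ∣ φ p := by
      intro n p hp
      have h1 : P.map φ = Ideal.span {Polynomial.X} := by
        rw [show P = Ideal.span {x, y} from rfl, Ideal.map_span]
        congr 1
        rw [Set.image_pair, hφx, hφy, Set.pair_eq_singleton]
      have h2 := Ideal.mem_map_of_mem φ hp
      rwa [Ideal.map_pow, h1, Ideal.span_singleton_pow, Ideal.mem_span_singleton] at h2
    have dvd_le : ∀ (m n : ℕ) (u : Polynomial k), u.coeff 0 ≠ 0 →
        (Polynomial.X : Polynomial k) ^ m ∣ Polynomial.X ^ n * u → m ≤ n := by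
      intro m n u hu hdvd
      by_contra h
      push_neg at h
      rw [Polynomial.X_pow_dvd_iff] at hdvd
      have h0 := hdvd n h
      have h1 := Polynomial.coeff_X_pow_mul u n 0
      rw [zero_add] at h1
      rw [h1] at h0
      exact hu h0
    have hxP : x ∈ P := Ideal.subset_span (Set.mem_insert _ _)
    have hx1 : x ^ α₁ ∈ P ^ α₁ := Ideal.pow_mem_pow hxP _
    have hx2 : x ^ α₂ ∈ P ^ α₂ := Ideal.pow_mem_pow hxP _
    have hx3 : x ^ β₁ ∈ P ^ β₁ := Ideal.pow_mem_pow hxP _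
    -- bound 1 : β₁ ≤ α₁ + 1
    have e1 : φ ((x ^ (a - 1) + y) * x ^ α₁ + (y ^ (b - 1) - x) * 0) =
        Polynomial.X ^ (α₁ + 1) * (Polynomial.X ^ (a - 2) + 1) := by
      rw [map_add, map_mul, map_mul, map_add, map_sub, map_pow, map_pow, map_pow,
        hφx, hφy, map_zero, mul_zero, add_zero,
        show a - 1 = (a - 2) + 1 from by omega]
      ring
    have b1 : β₁ ≤ α₁ + 1 := by
      refine dvd_le _ _ _ ?_ (e1 ▸ key β₁ _ (hfwd _ hx1 0 (zero_mem _)).1)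
      have h0 : ((Polynomial.X : Polynomial k) ^ (a - 2)).coeff 0 = 0 := by
        rw [Polynomial.coeff_X_pow]; simp; omega
      simp [h0]
    -- bound 2 : β₁ ≤ α₂ + 1
    have e2 : φ ((x ^ (a - 1) + y) * 0 + (y ^ (b - 1) - x) * x ^ α₂) =
        Polynomial.X ^ (α₂ + 1) * (Polynomial.X ^ (b - 2) - 1) := by
      rw [map_add, map_mul, map_mul, map_add, map_sub, map_pow, map_pow, map_pow,
        hφx, hφy, map_zero, mul_zero, zero_add,
        show b - 1 = (b - 2) + 1 from by omega]
      ring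
    have b2 : β₁ ≤ α₂ + 1 := by
      refine dvd_le _ _ _ ?_ (e2 ▸ key β₁ _ (hfwd 0 (zero_mem _) _ hx2).1)
      have h0 : ((Polynomial.X : Polynomial k) ^ (b - 2)).coeff 0 = 0 := by
        rw [Polynomial.coeff_X_pow]; simp; omega
      simp [h0]
    -- bound 3 : α₁ + a ≤ β₁ + 1
    have e3 : φ (x * x ^ β₁ + (y ^ (b - 1) - x) * 0) =
        Polynomial.X ^ (β₁ + 1) * 1 := by
      rw [map_add, map_mul, map_mul, map_pow, hφx, map_zero, mul_zero, add_zero]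
      ring
    have b3 : α₁ + a ≤ β₁ + 1 := by
      refine dvd_le _ _ _ ?_ (e3 ▸ key (α₁ + a) _ (hbwd _ hx3 0 (zero_mem _)).1)
      simp
    -- bound 4 : α₂ + a ≤ β₁ + 1
    have e4 : φ (y * x ^ β₁ - (x ^ (a - 1) + y) * 0) =
        Polynomial.X ^ (β₁ + 1) * 1 := by
      rw [map_sub, map_mul, map_mul, map_pow, hφx, hφy, map_zero, mul_zero, sub_zero]
      ring
    have b4 : α₂ + a ≤ β₁ + 1 := by
      refine dvd_le _ _ _ ?_ (e4 ▸ key (α₂ + a) _ (hbwd _ hx3 0 (zero_mem _)).2)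
      simp
    omega
end
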